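/- arXiv:math/9712212 — 2 statements merged into one kernel-verified Lean document; each statement's English description precedes it below -/
import Mathlib

section
/- Suppose a group G acts on a tree T by automorphisms, without inversions and without fixing any vertex, and the action is transitive on the (unoriented) edges of T. Let e be an edge of T, let E denote the vertex set of one component of T − e, and let Y = {k ∈ G : both endpoints of ke lie in E}, Y* = G − Y. Let Λ be a subgroup of G which fixes no vertex of T, and let T′ be a minimal Λ-invariant subtree of T. Then for every h ∈ G, the edge he lies in T′ if and only if there exists λ ∈ Λ such that λhY ⊊ hY or λhY* ⊊ hY*. -/
/-!
Statement 14: with `G` acting edge-transitively on the tree `T` without inversions and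
without fixing a vertex, `e` an edge, `E` one side of `T − e`, `Y` the associated subset
of `G`, `Λ ≤ G` a subgroup fixing no vertex and `T'` a minimal `Λ`-invariant subtree:
for every `h ∈ G`, the edge `he` lies in `T'` iff there is `λ ∈ Λ` with `λhY ⊊ hY` or
`λhY* ⊊ hY*`.
-/

open scoped Pointwise

namespace TreeMin

open SimpleGraph

variable {V G : Type*} [Group G] [MulAction G V]

/-- The vertex set of the component of `T` minus the edge `s(a,b)` containing `b`. -/
def side (T : SimpleGraph V) (a b : V) : Set V :=
  {x | (T.deleteEdges {s(a, b)}).Reachable b x}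

variable {T : SimpleGraph V}

lemma mem_side_self (a b : V) : b ∈ side T a b := Reachable.refl b

lemma delete_comm (a b : V) : T.deleteEdges {s(a, b)} = T.deleteEdges {s(b, a)} := by
  rw [Sym2.eq_swap]

lemma delete_eq_sdiff (a b : V) :
    T.deleteEdges {s(a, b)} = T \ fromEdgeSet {s(a, b)} := rfl

lemma side_swap (a b : V) :
    side T b a = {x | (T.deleteEdges {s(a, b)}).Reachable a x} := by
  unfold side
  rw [delete_comm]

/-- `a` is not in the side of `b`. -/
lemma not_mem_side (hT : T.IsTree) {a b : V} (hab : T.Adj a b) : a ∉ side T a b := by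
  intro h
  have hbr : T.IsBridge s(a, b) :=
    (isAcyclic_iff_forall_adj_isBridge.mp hT.2) hab
  rw [isBridge_iff] at hbr
  exact hbr h.symm

/-- crossing lemma : a walk from inside the side to outside must use the edge. -/
lemma edge_mem_of_cross {a b x y : V} (hx : x ∈ side T a b) (hy : y ∉ side T a b)
    (w : T.Walk x y) : s(a, b) ∈ w.edges := by
  by_contra hc
  have w' := w.toDeleteEdges {s(a,b)} (fun e he => by
    simp only [Set.mem_singleton_iff]
    rintro rfl
    exact hc he)
  exact hy (hx.trans w'.reachable)

lemma side_step {a b x d : V} (h : T.Adj x d)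
    (hx : x ∈ side T a b ∨ x ∈ side T b a) :
    d ∈ side T a b ∨ d ∈ side T b a := by
  by_cases he : s(x, d) = s(a, b)
  · rw [Sym2.eq_iff] at he
    rcases he with ⟨rfl, rfl⟩ | ⟨rfl, rfl⟩
    · exact Or.inl (mem_side_self _ _)
    · rw [side_swap]; exact Or.inr (Reachable.refl _)
  · have hr : (T.deleteEdges {s(a,b)}).Reachable x d :=
      Adj.reachable (by simp [he, h])
    rcases hx with hx | hx
    · exact Or.inl (hx.trans hr)
    · refine Or.inr (hx.trans ?_)
      rw [delete_comm b a]
      exact hr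

lemma side_walk {a b : V} : ∀ {p q : V} (_ : T.Walk p q),
    p ∈ side T a b ∨ p ∈ side T b a → q ∈ side T a b ∨ q ∈ side T b a
  | _, _, SimpleGraph.Walk.nil, hp => hp
  | _, _, SimpleGraph.Walk.cons h w, hp => side_walk w (side_step h hp)

lemma side_union (hT : T.IsTree) (a b : V) (x : V) :
    x ∈ side T a b ∨ x ∈ side T b a := by
  obtain ⟨w⟩ := hT.1 b x
  exact side_walk w (Or.inl (mem_side_self a b))

lemma side_disjoint (hT : T.IsTree) {a b : V} (hab : T.Adj a b) {x : V}
    (h1 : x ∈ side T a b) (h2 : x ∈ side T b a) : False := by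
  rw [side_swap] at h2
  exact not_mem_side hT hab (h1.trans h2.symm)

lemma compl_side (hT : T.IsTree) {a b : V} (hab : T.Adj a b) :
    (side T a b)ᶜ = side T b a := by
  ext x
  constructor
  · intro hx
    exact (side_union hT a b x).resolve_left hx
  · intro hx hx2
    exact side_disjoint hT hab hx2 hx

/-- injectivity of the action on unordered pairs -/
lemma sym2_smul_cancel {g : G} {x y c d : V} (h : s(g • x, g • y) = s(g • c, g • d)) :
    s(x, y) = s(c, d) := by
  rw [Sym2.eq_iff] at h ⊢
  rcases h with ⟨h1, h2⟩ | ⟨h1, h2⟩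
  · exact Or.inl ⟨smul_left_cancel g h1, smul_left_cancel g h2⟩
  · exact Or.inr ⟨smul_left_cancel g h1, smul_left_cancel g h2⟩

lemma reach_del_smul (hact : ∀ (g : G) (x y : V), T.Adj x y ↔ T.Adj (g • x) (g • y))
    (g : G) {a b x y : V} (h : (T.deleteEdges {s(a, b)}).Reachable x y) :
    (T.deleteEdges {s(g • a, g • b)}).Reachable (g • x) (g • y) := by
  obtain ⟨w⟩ := h
  refine ⟨w.map ⟨fun z => g • z, ?_⟩⟩
  intro p q hpq
  simp only [deleteEdges_adj, Set.mem_singleton_iff] at hpq ⊢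
  exact ⟨(hact g p q).mp hpq.1, fun hc => hpq.2 (sym2_smul_cancel hc)⟩

lemma smul_side (hact : ∀ (g : G) (x y : V), T.Adj x y ↔ T.Adj (g • x) (g • y))
    (g : G) (a b : V) : g • side T a b = side T (g • a) (g • b) := by
  ext x
  rw [Set.mem_smul_set_iff_inv_smul_mem]
  constructor
  · intro hx
    have := reach_del_smul hact g hx
    rwa [smul_inv_smul] at this
  · intro hx
    have := reach_del_smul hact g⁻¹ hx
    simp only [inv_smul_smul] at this
    exact this

/-- An edge crossing from outside the side to inside must be the cut edge (in order). -/
lemma eq_of_cross_edge (hT : T.IsTree) {a b a' b' : V} (hab : T.Adj a b)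
    (hadj : T.Adj a' b') (hb' : b' ∈ side T a b) (ha' : a' ∉ side T a b) :
    a' = a ∧ b' = b := by
  have hmem := edge_mem_of_cross hb' ha' (Walk.cons hadj.symm Walk.nil)
  simp only [Walk.edges_cons, Walk.edges_nil, List.mem_singleton] at hmem
  rw [Sym2.eq_iff] at hmem
  rcases hmem with ⟨rfl, rfl⟩ | ⟨rfl, rfl⟩
  · exact absurd hb' (not_mem_side hT hab)
  · exact ⟨rfl, rfl⟩

lemma side_inj (hT : T.IsTree) {a b a' b' : V} (hab : T.Adj a b) (hadj : T.Adj a' b')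
    (heq : side T a' b' = side T a b) : a' = a ∧ b' = b :=
  eq_of_cross_edge hT hab hadj (heq ▸ mem_side_self a' b')
    (heq ▸ not_mem_side hT hadj)

/-- Every vertex in the support of a walk in the deleted graph starting at `b`
lies in `side T a b`. -/
lemma support_subset_side {a b x : V} (w : (T.deleteEdges {s(a, b)}).Walk b x)
    {z : V} (hz : z ∈ w.support) : z ∈ side T a b := by
  classical
  exact ⟨w.takeUntil z hz⟩

/-- Nesting: if both endpoints of the edge `(a',b')` lie outside `side T a b` and
`b` lies in `side T a' b'`, then `side T a b ⊆ side T a' b'`. -/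
lemma side_subset_side (hT : T.IsTree) {a b a' b' : V} (hab : T.Adj a b)
    (hadj : T.Adj a' b') (ha' : a' ∉ side T a b) (hb' : b' ∉ side T a b)
    (hbm : b ∈ side T a' b') : side T a b ⊆ side T a' b' := by
  intro x hx
  obtain ⟨w⟩ := hx
  have hsup : ∀ z ∈ w.support, z ∈ side T a b := fun z hz => support_subset_side w hz
  have hne : s(a', b') ∉ w.edges := by
    intro hmem
    exact ha' (hsup a' (w.fst_mem_support_of_mem_edges hmem))
  have w' : (T.deleteEdges {s(a', b')}).Walk b x := by
    refine w.transfer _ ?_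
    intro e he
    have heT : e ∈ (T.deleteEdges {s(a,b)}).edgeSet := w.edges_subset_edgeSet he
    rw [edgeSet_deleteEdges] at heT
    rw [edgeSet_deleteEdges]
    refine ⟨heT.1, ?_⟩
    simp only [Set.mem_singleton_iff]
    rintro rfl
    exact hne he
  exact hbm.trans w'.reachable

/-- Under an edge-transitive, inversion-free action with no global fixed vertex,
`u` has a neighbour other than `v`. -/
lemma exists_other_neighbor (hT : T.IsTree)
    (hact : ∀ (g : G) (x y : V), T.Adj x y ↔ T.Adj (g • x) (g • y))
    (hni : ∀ (g : G) (x y : V), T.Adj x y → ¬(g • x = y ∧ g • y = x))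
    (hnofix : ¬ ∃ x : V, ∀ g : G, g • x = x) {u v : V} (huv : T.Adj u v)
    (htrans : ∀ x y : V, T.Adj x y → ∃ g : G, s(g • u, g • v) = s(x, y)) :
    ∃ w, T.Adj u w ∧ w ≠ v := by
  by_contra hcon
  push_neg at hcon
  have hnbr : ∀ (g : G) (y : V), T.Adj (g • u) y → y = g • v := by
    intro g y hy
    have h1 : T.Adj u (g⁻¹ • y) := by
      rw [hact g]
      simpa [smul_inv_smul] using hy
    have h2 := hcon _ h1
    rwa [inv_smul_eq_iff] at h2
  have hclo : ∀ x y : V, (x = v ∨ T.Adj v x) → T.Adj x y → (y = v ∨ T.Adj v y) := by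
    intro x y hx hxy
    obtain ⟨g, hg⟩ := htrans x y hxy
    rw [Sym2.eq_iff] at hg
    rcases hg with ⟨hg1, hg2⟩ | ⟨hg1, hg2⟩
    · rcases hx with rfl | hx
      · exact Or.inr hxy
      · left
        have := hnbr g v (by rw [hg1]; exact hx.symm)
        exact (this.trans hg2).symm
    · rcases hx with rfl | hx
      · exact Or.inr hxy
      · obtain ⟨g', hg'⟩ := htrans v x hx
        rw [Sym2.eq_iff] at hg'
        rcases hg' with ⟨hh1, hh2⟩ | ⟨hh1, hh2⟩
        · have hu : u = g' • v := hnbr g' u (by rw [hh1]; exact huv.symm)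
          have hx_eq : x = u := by rw [hu, hh2]
          left; exact hcon y (hx_eq ▸ hxy)
        · left
          have := hnbr g' y (by rw [hh1]; exact hxy)
          rw [hh2] at this
          exact this
  have hall : ∀ x, x = v ∨ T.Adj v x := by
    have key : ∀ {p q : V} (_ : T.Walk p q), (p = v ∨ T.Adj v p) → (q = v ∨ T.Adj v q) := by
      intro p q w
      induction w with
      | nil => exact id
      | cons h w ih => intro hp; exact ih (hclo _ _ hp h)
    intro x
    obtain ⟨w⟩ := hT.1 v x
    exact key w (Or.inl rfl)
  by_cases hdeg : ∀ w, T.Adj v w → w = u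
  · have hVall : ∀ x, x = v ∨ x = u := fun x => (hall x).imp id (fun h => hdeg x h)
    refine hnofix ⟨u, fun k => ?_⟩
    rcases hVall (k • u) with hk | hk
    · rcases hVall (k • v) with hk2 | hk2
      · exact absurd (smul_left_cancel k (hk.trans hk2.symm)) huv.ne
      · exact absurd ⟨hk, hk2⟩ (hni k u v huv)
    · exact hk
  · push_neg at hdeg
    obtain ⟨w, hvw, hwu⟩ := hdeg
    refine hnofix ⟨v, fun g => ?_⟩
    by_contra hgv
    have hadjv : T.Adj v (g • v) := (hall (g • v)).resolve_left hgv
    obtain ⟨g', hg'⟩ := htrans v (g • v) hadjv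
    rw [Sym2.eq_iff] at hg'
    rcases hg' with ⟨hh1, hh2⟩ | ⟨hh1, hh2⟩
    · have h1 : u = g' • v := hnbr g' u (by rw [hh1]; exact huv.symm)
      have h2 : w = g' • v := hnbr g' w (by rw [hh1]; exact hvw)
      exact hwu (h2.trans h1.symm)
    · have hu' : T.Adj (g • v) (g • u) := (hact g v u).mp huv.symm
      have hw' : T.Adj (g • v) (g • w) := (hact g v w).mp hvw
      have h1 : g • u = g' • v := hnbr g' _ (by rw [hh1]; exact hu')
      have h2 : g • w = g' • v := hnbr g' _ (by rw [hh1]; exact hw')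
      exact hwu (smul_left_cancel g (h2.trans h1.symm))


/-- Every vertex of a side has a neighbour inside the side, provided the head of
the cut edge has another neighbour. -/
lemma exists_edge_in_side {a b : V} (hab : T.Adj a b)
    (hNLb : ∃ c, T.Adj b c ∧ c ≠ a) {x : V} (hx : x ∈ side T a b) :
    ∃ y, T.Adj x y ∧ y ∈ side T a b := by
  by_cases hxb : x = b
  · subst hxb
    obtain ⟨c, hbc, hca⟩ := hNLb
    refine ⟨c, hbc, ?_⟩
    refine Adj.reachable ?_
    simp only [deleteEdges_adj, Set.mem_singleton_iff]
    refine ⟨hbc, ?_⟩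
    rw [Sym2.eq_iff]
    rintro (⟨rfl, rfl⟩ | ⟨-, rfl⟩)
    · exact hab.ne rfl
    · exact hca rfl
  · obtain ⟨w⟩ := hx
    obtain ⟨d, hadj, p, -⟩ := Walk.exists_eq_cons_of_ne hxb w.reverse
    refine ⟨d, (deleteEdges_adj.mp hadj).1, p.reachable.symm⟩

lemma smul_ssubset_iff {g : G} {X Y : Set V} : g • X ⊂ g • Y ↔ X ⊂ Y := by
  rw [Set.ssubset_def, Set.ssubset_def, Set.smul_set_subset_smul_set_iff,
    Set.smul_set_subset_smul_set_iff]

lemma ssubset_compl_iff {X Y : Set V} : Xᶜ ⊂ Yᶜ ↔ Y ⊂ X := by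
  rw [Set.ssubset_def, Set.ssubset_def, Set.compl_subset_compl, Set.compl_subset_compl]

/-- the set of group elements carrying the edge `(u,v)` into `B` -/
def pSet (G : Type*) [Group G] [MulAction G V] (u v : V) (B : Set V) : Set G :=
  {k : G | k • u ∈ B ∧ k • v ∈ B}

lemma smul_pSet (g : G) (u v : V) (B : Set V) :
    g • pSet G u v B = pSet G u v (g • B) := by
  ext k
  rw [Set.mem_smul_set_iff_inv_smul_mem]
  simp only [pSet, Set.mem_setOf_eq, Set.mem_smul_set_iff_inv_smul_mem, smul_smul,
    smul_eq_mul]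

lemma smul_pSet_compl (g : G) (u v : V) (B : Set V) :
    g • (pSet G u v B)ᶜ = (pSet G u v (g • B))ᶜ := by
  rw [Set.smul_set_compl, smul_pSet]

section Corr

variable (hT : T.IsTree)
    (hact : ∀ (g : G) (x y : V), T.Adj x y ↔ T.Adj (g • x) (g • y))
    (hni : ∀ (g : G) (x y : V), T.Adj x y → ¬(g • x = y ∧ g • y = x))
    (hnofix : ¬ ∃ x : V, ∀ g : G, g • x = x)
    {u v : V} (huv : T.Adj u v)
    (htrans : ∀ x y : V, T.Adj x y → ∃ g : G, s(g • u, g • v) = s(x, y))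

include hT hact hni hnofix huv htrans

lemma pSet_side_subset_iff (g₁ g₂ : G) :
    pSet G u v (side T (g₁ • u) (g₁ • v)) ⊆ pSet G u v (side T (g₂ • u) (g₂ • v)) ↔
      side T (g₁ • u) (g₁ • v) ⊆ side T (g₂ • u) (g₂ • v) := by
  constructor
  · intro hsub x hx
    have htrans' : ∀ x y : V, T.Adj x y → ∃ g : G, s(g • v, g • u) = s(x, y) := by
      intro x y hxy
      obtain ⟨g, hg⟩ := htrans x y hxy
      exact ⟨g, by rw [Sym2.eq_swap]; exact hg⟩
    obtain ⟨c, hvc, hcu⟩ :=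
      exists_other_neighbor hT hact hni hnofix huv.symm htrans'
    have hNLb : ∃ c', T.Adj (g₁ • v) c' ∧ c' ≠ g₁ • u :=
      ⟨g₁ • c, (hact g₁ v c).mp hvc, fun hc => hcu (smul_left_cancel g₁ hc)⟩
    obtain ⟨y, hxy, hy⟩ := exists_edge_in_side ((hact g₁ u v).mp huv) hNLb hx
    obtain ⟨k, hk⟩ := htrans x y hxy
    rw [Sym2.eq_iff] at hk
    rcases hk with ⟨hk1, hk2⟩ | ⟨hk1, hk2⟩
    · have := hsub ⟨hk1.symm ▸ hx, hk2.symm ▸ hy⟩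
      exact hk1 ▸ this.1
    · have := hsub ⟨hk1.symm ▸ hy, hk2.symm ▸ hx⟩
      exact hk2 ▸ this.2
  · intro hsub k hk
    exact ⟨hsub hk.1, hsub hk.2⟩

lemma pSet_side_ssubset_iff (g₁ g₂ : G) :
    pSet G u v (side T (g₁ • u) (g₁ • v)) ⊂ pSet G u v (side T (g₂ • u) (g₂ • v)) ↔
      side T (g₁ • u) (g₁ • v) ⊂ side T (g₂ • u) (g₂ • v) := by
  rw [Set.ssubset_def, Set.ssubset_def,
    pSet_side_subset_iff hT hact hni hnofix huv htrans,
    pSet_side_subset_iff hT hact hni hnofix huv htrans]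

end Corr

/-- a chosen path between two vertices of a tree -/
noncomputable def pb [DecidableEq V] (hT : T.IsTree) (x y : V) : T.Walk x y :=
  (hT.1 x y).some.bypass

lemma pb_isPath [DecidableEq V] (hT : T.IsTree) (x y : V) : (pb hT x y).IsPath :=
  Walk.bypass_isPath _

lemma path_support_subset [DecidableEq V] (hT : T.IsTree) {x y : V} {p : T.Walk x y} (hp : p.IsPath)
    (w : T.Walk x y) : p.support ⊆ w.support ∧ p.edges ⊆ w.edges := by
  have := hT.2.path_unique ⟨p, hp⟩ ⟨w.bypass, w.bypass_isPath⟩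
  have heq : p = w.bypass := congrArg Subtype.val this
  rw [heq]
  exact ⟨w.support_bypass_subset, w.edges_bypass_subset⟩

lemma pb_support_subset [DecidableEq V] (hT : T.IsTree) {x y : V} (w : T.Walk x y) :
    (pb hT x y).support ⊆ w.support :=
  (path_support_subset hT (pb_isPath hT x y) w).1

/-- extract a `T`-walk from a walk in an induced subgraph -/
lemma walk_of_induce {S : Set V} {x y : S} (w : (T.induce S).Walk x y) :
    ∃ w' : T.Walk x.1 y.1, ∀ z ∈ w'.support, z ∈ S := by
  induction w with
  | nil =>
    refine ⟨Walk.nil, ?_⟩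
    intro z hz
    rw [Walk.support_nil, List.mem_singleton] at hz
    subst hz; exact Subtype.coe_prop _
  | @cons p q r h w ih =>
    obtain ⟨w', hw'⟩ := ih
    have hh : T.Adj p.1 q.1 := h
    refine ⟨Walk.cons hh w', ?_⟩
    intro z hz
    rw [Walk.support_cons, List.mem_cons] at hz
    rcases hz with rfl | hz
    · exact p.2
    · exact hw' z hz

/-- a `T`-walk with support in `S` gives reachability in the induced graph -/
lemma induce_reachable_of_walk {S : Set V} : ∀ {x y : V} (w : T.Walk x y)
    (_ : ∀ z ∈ w.support, z ∈ S) (hx : x ∈ S) (hy : y ∈ S),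
    (T.induce S).Reachable ⟨x, hx⟩ ⟨y, hy⟩ := by
  intro x y w
  induction w with
  | nil => intro _ hx hy; rfl
  | @cons p q r h w ih =>
    intro hsup hx hy
    have hq : q ∈ S := hsup q (by simp [Walk.support_cons])
    have h1 : (T.induce S).Adj ⟨p, hx⟩ ⟨q, hq⟩ := h
    exact (h1.reachable).trans (ih (fun z hz => hsup z (by simp [Walk.support_cons, hz])) hq hy)

lemma no_invariant_in_side (hT : T.IsTree)
    (hact : ∀ (g : G) (x y : V), T.Adj x y ↔ T.Adj (g • x) (g • y))
    {a b : V} (hab : T.Adj a b)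
    {L : Subgroup G} {l : G} (hl : l ∈ L)
    (hstrict : l • side T a b ⊂ side T a b)
    {S : Set V} (hS : S.Nonempty) (hinv : ∀ m ∈ L, m • S = S)
    (hsub : S ⊆ side T a b) : False := by
  set A := side T a b with hA
  have hchain : ∀ n : ℕ, l ^ (n + 1) • A ⊂ A := by
    intro n
    induction n with
    | zero => simpa [pow_one] using hstrict
    | succ n ih =>
      have h1 := (smul_ssubset_iff (g := l)).mpr ih
      rw [← mul_smul, ← pow_succ'] at h1
      exact h1.trans hstrict
  have hadj : ∀ m : G, T.Adj (m • a) (m • b) := fun m => (hact m a b).mp hab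
  have hbnot : ∀ n : ℕ, b ∉ l ^ (n + 1) • A := by
    intro n hbm
    have hanot : a ∉ l ^ (n + 1) • A := fun ha =>
      (not_mem_side hT hab) ((hchain n).subset ha)
    rw [hA, smul_side hact] at hbm hanot
    have hdet := eq_of_cross_edge hT (hadj _) hab hbm hanot
    have : l ^ (n + 1) • A = A := by
      rw [hA, smul_side hact, ← hdet.1, ← hdet.2]
    exact (hchain n).ne this
  have hedge : ∀ n m : ℕ, n < m →
      s(l ^ (n + 1) • a, l ^ (n + 1) • b) ≠ s(l ^ (m + 1) • a, l ^ (m + 1) • b) := by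
    intro n m hnm heq
    have hsub2 : l ^ (m + 1) • A ⊂ l ^ (n + 1) • A := by
      have h0 := hchain (m - n - 1)
      rw [show m - n - 1 + 1 = m - n from by omega] at h0
      have h1 := (smul_ssubset_iff (g := l ^ (n + 1))).mpr h0
      rwa [← mul_smul, ← pow_add, show n + 1 + (m - n) = m + 1 from by omega] at h1
    rw [Sym2.eq_iff] at heq
    rcases heq with ⟨h1, h2⟩ | ⟨h1, h2⟩
    · have : l ^ (n + 1) • A = l ^ (m + 1) • A := by
        rw [hA, smul_side hact, smul_side hact, h1, h2]
      exact hsub2.ne this.symm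
    · have hc : l ^ (m + 1) • A = (l ^ (n + 1) • A)ᶜ := by
        rw [hA, smul_side hact, smul_side hact, ← h1, ← h2,
          compl_side hT (hadj (l ^ (n + 1)))]
      have hbm : l ^ (m + 1) • b ∈ l ^ (m + 1) • A :=
        Set.smul_mem_smul_set (mem_side_self a b)
      have h3 := hsub2.subset hbm
      rw [hc] at hbm
      exact hbm h3
  obtain ⟨x, hx⟩ := hS
  obtain ⟨w⟩ := hT.1 b x
  have hcross : ∀ n : ℕ, s(l ^ (n + 1) • a, l ^ (n + 1) • b) ∈ w.edges := by
    intro n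
    have hxm : x ∈ l ^ (n + 1) • A := by
      have hs : S ⊆ l ^ (n + 1) • A := by
        rw [← hinv _ (pow_mem hl (n + 1))]
        exact Set.smul_set_mono hsub
      exact hs hx
    rw [hA, smul_side hact] at hxm
    have hbn := hbnot n
    rw [hA, smul_side hact] at hbn
    have hmem := edge_mem_of_cross hxm hbn w.reverse
    rwa [Walk.edges_reverse, List.mem_reverse] at hmem
  have hinj : Function.Injective (fun n : ℕ => s(l ^ (n + 1) • a, l ^ (n + 1) • b)) := by
    intro n m hnm
    rcases lt_trichotomy n m with h | h | h
    · exact absurd hnm (hedge n m h)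
    · exact h
    · exact absurd hnm.symm (hedge m n h)
  have hinf : Set.Infinite {e : Sym2 V | e ∈ w.edges} :=
    Set.infinite_of_injective_forall_mem hinj hcross
  exact hinf (w.edges.finite_toSet)

lemma mem_S_of_strict (hT : T.IsTree)
    (hact : ∀ (g : G) (x y : V), T.Adj x y ↔ T.Adj (g • x) (g • y))
    {a b : V} (hab : T.Adj a b)
    {L : Subgroup G} {l : G} (hl : l ∈ L)
    (hstrict : l • side T a b ⊂ side T a b)
    {S : Set V} (hconn : (T.induce S).Connected) (hinv : ∀ m ∈ L, m • S = S) :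
    b ∈ S := by
  by_contra hbS
  obtain ⟨⟨x0, hx0⟩⟩ := hconn.nonempty
  have hcases : S ⊆ side T a b ∨ S ⊆ side T b a := by
    by_cases hc : S ⊆ side T a b
    · exact Or.inl hc
    · right
      obtain ⟨p, hpS, hpA⟩ := Set.not_subset.mp hc
      intro q hqS
      by_contra hqn
      have hqA : q ∈ side T a b := (side_union hT a b q).resolve_right hqn
      obtain ⟨wi⟩ := hconn ⟨q, hqS⟩ ⟨p, hpS⟩
      obtain ⟨w', hw'⟩ := walk_of_induce wi
      have hedge := edge_mem_of_cross hqA hpA w'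
      exact hbS (hw' b (w'.snd_mem_support_of_mem_edges hedge))
  rcases hcases with hcase | hcase
  · exact no_invariant_in_side hT hact hab hl hstrict ⟨x0, hx0⟩ hinv hcase
  · have h1 : (side T a b)ᶜ ⊂ (l • side T a b)ᶜ := ssubset_compl_iff.mpr hstrict
    rw [← Set.smul_set_compl] at h1
    have h2 := (smul_ssubset_iff (g := l⁻¹)).mpr h1
    rw [inv_smul_smul, compl_side hT hab] at h2
    exact no_invariant_in_side hT hact hab.symm (inv_mem hl) h2 ⟨x0, hx0⟩ hinv hcase

lemma spanned [DecidableEq V] (hT : T.IsTree)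
    (hact : ∀ (g : G) (x y : V), T.Adj x y ↔ T.Adj (g • x) (g • y))
    {L : Subgroup G} {S : Set V}
    (hconn : (T.induce S).Connected) (hinv : ∀ m ∈ L, m • S = S)
    (hmin : ∀ S' : Set V, S' ⊆ S → (T.induce S').Connected →
      (∀ m ∈ L, m • S' = S') → S' = S)
    {c : V} (hc : c ∈ S) {x : V} (hx : x ∈ S) :
    ∃ m ∈ L, x ∈ (pb hT c (m • c)).support := by
  set U : Set V := {z | ∃ m ∈ L, z ∈ (pb hT c (m • c)).support} with hU
  have hUS : U ⊆ S := by
    rintro z ⟨m, hm, hz⟩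
    have hmc : m • c ∈ S := by rw [← hinv m hm]; exact Set.smul_mem_smul_set hc
    obtain ⟨wi⟩ := hconn ⟨c, hc⟩ ⟨m • c, hmc⟩
    obtain ⟨w', hw'⟩ := walk_of_induce wi
    exact hw' z (pb_support_subset hT w' hz)
  have hcU : c ∈ U := ⟨1, one_mem L, (pb hT c ((1 : G) • c)).start_mem_support⟩
  have hpre : ∀ z (hz : z ∈ U), (T.induce U).Reachable ⟨c, hcU⟩ ⟨z, hz⟩ := by
    intro z hz
    obtain ⟨m, hm, hzm⟩ := id hz
    refine induce_reachable_of_walk ((pb hT c (m • c)).takeUntil z hzm) ?_ hcU hz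
    intro y hy
    exact ⟨m, hm, (pb hT c (m • c)).support_takeUntil_subset hzm hy⟩
  have hUconn : (T.induce U).Connected := by
    haveI : Nonempty U := ⟨⟨c, hcU⟩⟩
    refine ⟨fun z1 z2 => ?_⟩
    obtain ⟨z1, hz1⟩ := z1
    obtain ⟨z2, hz2⟩ := z2
    exact (hpre z1 hz1).symm.trans (hpre z2 hz2)
  have hUinv : ∀ m' ∈ L, m' • U = U := by
    have key : ∀ m' ∈ L, m' • U ⊆ U := by
      rintro m' hm' _ ⟨z, ⟨m, hm, hz⟩, rfl⟩
      let f : T →g T := ⟨fun t => m' • t, fun hadj => (hact m' _ _).mp hadj⟩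
      let w2 : T.Walk (m' • c) (m' • (m • c)) := (pb hT c (m • c)).map f
      have hz2 : m' • z ∈ w2.support := by
        show m' • z ∈ ((pb hT c (m • c)).map f).support
        rw [Walk.support_map]
        exact List.mem_map_of_mem hz
      have hw2path : w2.IsPath :=
        Walk.map_isPath_of_injective (f := f) (MulAction.injective m') (pb_isPath hT _ _)
      have hsub3 :=
        (path_support_subset hT hw2path
          ((pb hT c (m' • c)).reverse.append (pb hT c (m' • (m • c))))).1 hz2
      rw [Walk.mem_support_append_iff] at hsub3
      rcases hsub3 with h | h
      · rw [Walk.support_reverse, List.mem_reverse] at h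
        exact ⟨m', hm', h⟩
      · refine ⟨m' * m, mul_mem hm' hm, ?_⟩
        rw [mul_smul]
        exact h
    intro m' hm'
    refine le_antisymm (key m' hm') ?_
    have h2 := key m'⁻¹ (inv_mem hm')
    calc U = m' • m'⁻¹ • U := by rw [smul_inv_smul]
    _ ⊆ m' • U := Set.smul_set_mono h2
  have hUeq := hmin U hUS hUconn hUinv
  rw [← hUeq] at hx
  exact hx

lemma half (hT : T.IsTree)
    (hact : ∀ (g : G) (x y : V), T.Adj x y ↔ T.Adj (g • x) (g • y))
    (hni : ∀ (g : G) (x y : V), T.Adj x y → ¬(g • x = y ∧ g • y = x))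
    {a b : V} (hab : T.Adj a b)
    {L : Subgroup G} {S : Set V}
    (hconn : (T.induce S).Connected) (hinv : ∀ m ∈ L, m • S = S)
    (hmin : ∀ S' : Set V, S' ⊆ S → (T.induce S').Connected →
      (∀ m ∈ L, m • S' = S') → S' = S)
    (haS : a ∈ S) (hbS : b ∈ S) :
    (∃ l ∈ L, l • side T a b ⊂ side T a b) ∨
      (∃ l ∈ L, side T a b ⊂ l • side T b a) := by
  classical
  obtain ⟨l1, hl1, hal1⟩ := spanned hT hact hconn hinv hmin hbS haS
  have hb1 : l1 • b ∉ side T a b := by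
    intro hmem
    obtain ⟨wdel⟩ := hmem
    have hTedges : ∀ e ∈ wdel.edges, e ∈ T.edgeSet := by
      intro e he
      have h1 := wdel.edges_subset_edgeSet he
      rw [edgeSet_deleteEdges] at h1
      exact h1.1
    have hsupmem := (path_support_subset hT (pb_isPath hT b (l1 • b))
        (wdel.transfer T hTedges)).1 hal1
    rw [Walk.support_transfer] at hsupmem
    exact not_mem_side hT hab (support_subset_side wdel hsupmem)
  have ha1 : l1 • a ∉ side T a b := by
    intro hmem
    have hdet := eq_of_cross_edge hT hab ((hact l1 b a).mp hab.symm) hmem hb1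
    exact hni l1 a b hab ⟨hdet.2, hdet.1⟩
  have hadj1 : T.Adj (l1 • a) (l1 • b) := (hact l1 a b).mp hab
  rcases side_union hT (l1 • a) (l1 • b) b with hbm | hbm
  · left
    have hsub := side_subset_side hT hab hadj1 ha1 hb1 hbm
    have hne : side T a b ≠ side T (l1 • a) (l1 • b) := by
      intro heq
      have hdet := side_inj hT hab hadj1 heq.symm
      exact hb1 (hdet.2.symm ▸ mem_side_self a b)
    have hstrict : side T a b ⊂ side T (l1 • a) (l1 • b) :=
      (Set.ssubset_iff_subset_ne).mpr ⟨hsub, hne⟩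
    rw [← smul_side hact] at hstrict
    have h3 : l1⁻¹ • side T a b ⊂ l1⁻¹ • (l1 • side T a b) :=
      smul_ssubset_iff.mpr hstrict
    rw [inv_smul_smul] at h3
    exact ⟨l1⁻¹, inv_mem hl1, h3⟩
  · right
    have hsub := side_subset_side hT hab hadj1.symm hb1 ha1 hbm
    have hne : side T a b ≠ side T (l1 • b) (l1 • a) := by
      intro heq
      have hdet := side_inj hT hab hadj1.symm heq.symm
      exact hni l1 a b hab ⟨hdet.2, hdet.1⟩
    have hstrict : side T a b ⊂ side T (l1 • b) (l1 • a) :=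
      (Set.ssubset_iff_subset_ne).mpr ⟨hsub, hne⟩
    rw [← smul_side hact] at hstrict
    exact ⟨l1, hl1, hstrict⟩

lemma exists_strict_of_mem (hT : T.IsTree)
    (hact : ∀ (g : G) (x y : V), T.Adj x y ↔ T.Adj (g • x) (g • y))
    (hni : ∀ (g : G) (x y : V), T.Adj x y → ¬(g • x = y ∧ g • y = x))
    {a b : V} (hab : T.Adj a b)
    {L : Subgroup G} {S : Set V}
    (hconn : (T.induce S).Connected) (hinv : ∀ m ∈ L, m • S = S)
    (hmin : ∀ S' : Set V, S' ⊆ S → (T.induce S').Connected →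
      (∀ m ∈ L, m • S' = S') → S' = S)
    (haS : a ∈ S) (hbS : b ∈ S) :
    ∃ l ∈ L, l • side T a b ⊂ side T a b ∨ l • side T b a ⊂ side T b a := by
  rcases half hT hact hni hab hconn hinv hmin haS hbS with ⟨l, hl, h⟩ | ⟨l1, hl1, bad1⟩
  · exact ⟨l, hl, Or.inl h⟩
  rcases half hT hact hni hab.symm hconn hinv hmin hbS haS with ⟨l, hl, h⟩ | ⟨l2, hl2, bad2⟩
  · exact ⟨l, hl, Or.inr h⟩
  have hcomb : side T a b ⊂ (l1 * l2) • side T a b := by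
    have h2 : l1 • side T b a ⊆ l1 • (l2 • side T a b) := Set.smul_set_mono bad2.subset
    rw [mul_smul]
    exact lt_of_lt_of_le bad1 h2
  have h3 : (l1 * l2)⁻¹ • side T a b ⊂ (l1 * l2)⁻¹ • ((l1 * l2) • side T a b) :=
    smul_ssubset_iff.mpr hcomb
  rw [inv_smul_smul] at h3
  exact ⟨(l1 * l2)⁻¹, inv_mem (mul_mem hl1 hl2), Or.inl h3⟩

end TreeMin

open TreeMin

theorem translated_edge_in_minimal_subtree_iff
    {V G : Type*} [Group G] [MulAction G V] (T : SimpleGraph V) (hT : T.IsTree)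
    -- `G` acts on the tree `T` by automorphisms:
    (hact : ∀ (g : G) (x y : V), T.Adj x y ↔ T.Adj (g • x) (g • y))
    -- the action is without inversions:
    (hni : ∀ (g : G) (x y : V), T.Adj x y → ¬(g • x = y ∧ g • y = x))
    -- no vertex is fixed by every element of `G`:
    (hnofix : ¬ ∃ x : V, ∀ g : G, g • x = x)
    -- `e` is the edge of `T` with endpoints `u` and `v`:
    (u v : V) (huv : T.Adj u v)
    -- the action is transitive on the (unoriented) edges of `T`:
    (htrans : ∀ x y : V, T.Adj x y → ∃ g : G, s(g • u, g • v) = s(x, y))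
    -- `E` is the vertex set of the component of `T − e` containing `v`:
    (E : Set V) (hE : E = {x : V | (T.deleteEdges {s(u, v)}).Reachable v x})
    -- `Y = {k ∈ G : both endpoints of ke lie in E}`, and `Y* = G − Y = Yᶜ`:
    (Y : Set G) (hY : Y = {k : G | k • u ∈ E ∧ k • v ∈ E})
    -- `Λ` is a subgroup of `G` fixing no vertex of `T`:
    (L : Subgroup G) (hLnofix : ¬ ∃ x : V, ∀ l ∈ L, l • x = x)
    -- `S` is the vertex set of a minimal `Λ`-invariant subtree `T'` of `T`:
    (S : Set V) (hconn : (T.induce S).Connected) (hinv : ∀ l ∈ L, l • S = S)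
    (hmin : ∀ S' : Set V, S' ⊆ S → (T.induce S').Connected →
      (∀ l ∈ L, l • S' = S') → S' = S)
    (h : G) :
    (h • u ∈ S ∧ h • v ∈ S) ↔
      ∃ l ∈ L, l • (h • Y) ⊂ h • Y ∨ l • (h • Yᶜ) ⊂ h • Yᶜ := by
  have hsideE : E = side T u v := hE
  have hYP : Y = pSet G u v (side T u v) := by rw [hY, hsideE]; rfl
  have hadjh : T.Adj (h • u) (h • v) := (hact h u v).mp huv
  set A : Set V := side T (h • u) (h • v) with hAdef
  have hsmulY : ∀ g : G, g • Y = pSet G u v (side T (g • u) (g • v)) := by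
    intro g
    rw [hYP, smul_pSet, smul_side hact]
  have hsmulYc : ∀ g : G, g • Yᶜ = (pSet G u v (side T (g • u) (g • v)))ᶜ := by
    intro g
    rw [hYP, smul_pSet_compl, smul_side hact]
  have hleft : ∀ l : G, (l • (h • Y) ⊂ h • Y) ↔ l • A ⊂ A := by
    intro l
    rw [← mul_smul, hsmulY (l * h), hsmulY h,
      pSet_side_ssubset_iff hT hact hni hnofix huv htrans (l * h) h,
      hAdef, ← smul_side hact, ← smul_side hact, mul_smul]
  have hright : ∀ l : G, (l • (h • Yᶜ) ⊂ h • Yᶜ) ↔ A ⊂ l • A := by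
    intro l
    rw [← mul_smul, hsmulYc (l * h), hsmulYc h, ssubset_compl_iff,
      pSet_side_ssubset_iff hT hact hni hnofix huv htrans h (l * h),
      hAdef, ← smul_side hact, ← smul_side hact, mul_smul]
  constructor
  · rintro ⟨hu', hv'⟩
    obtain ⟨l, hl, hcase⟩ :=
      exists_strict_of_mem hT hact hni hadjh hconn hinv hmin hu' hv'
    refine ⟨l, hl, ?_⟩
    rcases hcase with hc | hc
    · exact Or.inl ((hleft l).mpr hc)
    · refine Or.inr ((hright l).mpr ?_)
      rw [← compl_side hT hadjh, Set.smul_set_compl] at hc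
      exact ssubset_compl_iff.mp hc
  · rintro ⟨l, hl, hcase⟩
    have hmA : ∃ m ∈ L, m • A ⊂ A := by
      rcases hcase with hc | hc
      · exact ⟨l, hl, (hleft l).mp hc⟩
      · have hc' := (hright l).mp hc
        have h3 : l⁻¹ • A ⊂ l⁻¹ • (l • A) := smul_ssubset_iff.mpr hc'
        rw [inv_smul_smul] at h3
        exact ⟨l⁻¹, inv_mem hl, h3⟩
    obtain ⟨m, hm, hmA⟩ := hmA
    constructor
    · have h1 : Aᶜ ⊂ (m • A)ᶜ := ssubset_compl_iff.mpr hmA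
      rw [← Set.smul_set_compl] at h1
      have h2 := (smul_ssubset_iff (g := m⁻¹)).mpr h1
      rw [inv_smul_smul] at h2
      rw [hAdef, compl_side hT hadjh] at h2
      exact mem_S_of_strict hT hact hadjh.symm (inv_mem hm) h2 hconn hinv
    · exact mem_S_of_strict hT hact hadjh hm hmA hconn hinv
end

section
/- Let G be a finitely generated group with finitely generated subgroups Λ and Σ, and suppose G is the amalgamated free product of subgroups A₁ and B₁ over Λ (with Λ proper in A₁ and B₁) and also the amalgamated free product of subgroups A₂ and B₂ over Σ (with Σ proper in A₂ and B₂). Let X be the Λ-almost invariant subset of G associated to the first splitting (the set of elements whose normal form with respect to G = A₁ ∗_Λ B₁ begins with a non-trivial element of a transversal of Λ in A₁) and Y the Σ-almost invariant subset associated to the second splitting (defined analogously for G = A₂ ∗_Σ B₂). Assume that for all g, h ∈ G the intersection gΛg⁻¹ ∩ hΣh⁻¹ has infinite index in gΛg⁻¹. If there exists λ ∈ Λ such that λY ⊊ Y or λY* ⊊ Y*, then X crosses Y. -/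
/-!
Statement 16 (half of Lemma 3.6, as corrected): `G` finitely generated, with two
splittings `G = A₁ ∗_Λ B₁` and `G = A₂ ∗_Σ B₂` over finitely generated subgroups `Λ`,
`Σ`, with associated almost invariant sets `X` and `Y`; if every conjugate of `Λ` meets
every conjugate of `Σ` in a subgroup of infinite index in the conjugate of `Λ`, and some
`λ ∈ Λ` satisfies `λY ⊊ Y` or `λY* ⊊ Y*`, then `X` crosses `Y`.
-/

open scoped Pointwise symmDiff

/-- `T` is a right transversal for `Λ` in `A` containing `1`: `T ⊆ A`, `1 ∈ T`, and each
coset `aΛ` (`a ∈ A`) contains exactly one element of `T`. -/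
def IsRightTransversalOf {G : Type*} [Group G] (Lam A : Subgroup G) (T : Set G) : Prop :=
  T ⊆ (A : Set G) ∧ (1 : G) ∈ T ∧ ∀ a ∈ A, ∃! t, t ∈ T ∧ t⁻¹ * a ∈ Lam

/-- `l` is a normal word with respect to the transversals `T` (for `Λ` in `A`) and `T'`
(for `Λ` in `B`): a list of non-identity letters alternating between `T` and `T'`.
Such a list, followed by an element `λ ∈ Λ`, is the normal form `a₁b₁⋯aₙbₙλ` (where `a₁`,
resp. `bₙ`, may be trivial, i.e. absent). -/
def IsNormalWord {G : Type*} [Group G] (T T' : Set G) (l : List G) : Prop :=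
  (∀ x ∈ l, x ≠ 1 ∧ (x ∈ T ∨ x ∈ T')) ∧
    l.Chain' fun x y => (x ∈ T ∧ y ∈ T') ∨ (x ∈ T' ∧ y ∈ T)

/-- Every element of `G` is expressible uniquely in the normal form `a₁b₁⋯aₙbₙλ`.
Together with `IsRightTransversalOf` hypotheses and `Λ = A ⊓ B`, this encodes that `G` is
the amalgamated free product `A ∗_Λ B`. -/
def HasUniqueNormalForms {G : Type*} [Group G] (Lam : Subgroup G) (T T' : Set G) : Prop :=
  ∀ g : G, ∃! p : List G × G,
    IsNormalWord T T' p.1 ∧ p.2 ∈ Lam ∧ g = p.1.prod * p.2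

/-- The set `X` of elements of `G` whose normal form `a₁b₁⋯aₙbₙλ` has `a₁` non-trivial,
i.e. whose normal word is nonempty and begins with a letter of `T`. -/
def amalgX {G : Type*} [Group G] (Lam : Subgroup G) (T T' : Set G) : Set G :=
  {g : G | ∃ (l : List G) (lam : G), IsNormalWord T T' l ∧ lam ∈ Lam ∧
    g = l.prod * lam ∧ ∃ x, l.head? = some x ∧ x ∈ T}

/-- The image of a subset `X ⊆ G` in the set `H\G` of right cosets `Hg`
(the quotient of `G` by the left multiplication action of `H`). -/
def rproj {G : Type*} [Group G] (H : Subgroup G) (X : Set G) :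
    Set (Quotient (QuotientGroup.rightRel H)) :=
  Quotient.mk (QuotientGroup.rightRel H) '' X

/-- Two sets are almost equal if their symmetric difference is finite. -/
def AlmostEqSets {α : Type*} (A B : Set α) : Prop :=
  (A ∆ B).Finite

/-- `X ⊆ G` is `H`-almost invariant: `hX = X` for all `h ∈ H`, and for every `g ∈ G`
the sets `(H\X)g` and `H\X` are almost equal. -/
def IsAlmostInvariant {G : Type*} [Group G] (H : Subgroup G) (X : Set G) : Prop :=
  (∀ h ∈ H, h • X = X) ∧
    ∀ g : G, AlmostEqSets (rproj H ((fun x => x * g) '' X)) (rproj H X)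

/-- `X` crosses `Y`, where `Y` is `K`-almost invariant: each of the four sets
`X ∩ Y`, `Xᶜ ∩ Y`, `X ∩ Yᶜ`, `Xᶜ ∩ Yᶜ` projects to an infinite subset of `K\G`. -/
def Crosses {G : Type*} [Group G] (K : Subgroup G) (X Y : Set G) : Prop :=
  (rproj K (X ∩ Y)).Infinite ∧ (rproj K (Xᶜ ∩ Y)).Infinite ∧
    (rproj K (X ∩ Yᶜ)).Infinite ∧ (rproj K (Xᶜ ∩ Yᶜ)).Infinite

namespace AFPAux

variable {G : Type*} [Group G]

/-- an alternating word: letters alternate between `A \ H` and `B \ H`. -/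
def Alt (H A B : Subgroup G) (l : List G) : Prop :=
  (∀ x ∈ l, (x ∈ A ∧ x ∉ H) ∨ (x ∈ B ∧ x ∉ H)) ∧
    l.Chain' fun x y => (x ∈ A ∧ y ∈ B) ∨ (x ∈ B ∧ y ∈ A)

def Match (H A B : Subgroup G) (T T' : Set G) (x y : G) : Prop :=
  (x ∈ A ∧ x ∉ H ∧ y ∈ T ∧ y ≠ 1) ∨ (x ∈ B ∧ x ∉ H ∧ y ∈ T' ∧ y ≠ 1)

variable {H A B : Subgroup G} {T T' : Set G}

lemma tv_eq_one (hT : IsRightTransversalOf H A T) {t : G} (ht : t ∈ T) (htH : t ∈ H) : t = 1 := by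
  obtain ⟨s, -, hu⟩ := hT.2.2 t (hT.1 ht)
  have h1 : t = s := hu t ⟨ht, by rw [inv_mul_cancel]; exact H.one_mem⟩
  have h2 : (1 : G) = s := hu 1 ⟨hT.2.1, by simpa using htH⟩
  rw [h1, ← h2]

lemma mem_of_mem_both (hH : H = A ⊓ B) {x : G} (hxA : x ∈ A) (hxB : x ∈ B) : x ∈ H := by
  rw [hH]; exact ⟨hxA, hxB⟩

lemma tv_inter (hH : H = A ⊓ B) (hT : IsRightTransversalOf H A T)
    (hT' : IsRightTransversalOf H B T') {t : G} (h1 : t ∈ T) (h2 : t ∈ T') : t = 1 :=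
  tv_eq_one hT h1 (mem_of_mem_both hH (hT.1 h1) (hT'.1 h2))

lemma exists_rep (hT : IsRightTransversalOf H A T) {a : G} (ha : a ∈ A) :
    ∃ t σ, t ∈ T ∧ σ ∈ H ∧ a = t * σ ∧ (a ∉ H → t ≠ 1) := by
  obtain ⟨t, ⟨htT, htH⟩, -⟩ := hT.2.2 a ha
  refine ⟨t, t⁻¹ * a, htT, htH, (mul_inv_cancel_left t a).symm, ?_⟩
  rintro haH rfl
  exact haH (by simpa using htH)

lemma normal_letter_side (hH : H = A ⊓ B) (hT : IsRightTransversalOf H A T)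
    (hT' : IsRightTransversalOf H B T') {l : List G} (hl : IsNormalWord T T' l)
    {x : G} (hx : x ∈ l) : (x ∈ A ∧ x ∉ H) ∨ (x ∈ B ∧ x ∉ H) := by
  obtain ⟨hne, hTT⟩ := hl.1 x hx
  rcases hTT with h | h
  · exact Or.inl ⟨hT.1 h, fun hmem => hne (tv_eq_one hT h hmem)⟩
  · exact Or.inr ⟨hT'.1 h, fun hmem => hne (tv_eq_one hT' h hmem)⟩

lemma normal_alt (hH : H = A ⊓ B) (hT : IsRightTransversalOf H A T)
    (hT' : IsRightTransversalOf H B T') {l : List G} (hl : IsNormalWord T T' l) :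
    Alt H A B l := by
  refine ⟨fun x hx => normal_letter_side hH hT hT' hl hx, hl.2.imp ?_⟩
  rintro x y (⟨hx, hy⟩ | ⟨hx, hy⟩)
  · exact Or.inl ⟨hT.1 hx, hT'.1 hy⟩
  · exact Or.inr ⟨hT'.1 hx, hT.1 hy⟩

lemma forall₂_head? {R : G → G → Prop} {l l' : List G} (h : List.Forall₂ R l l') :
    ∀ x, l.head? = some x → ∃ y, l'.head? = some y ∧ R x y := by
  cases h with
  | nil => intro x hx; simp at hx
  | cons h1 h2 => intro x hx; simp at hx; subst hx; exact ⟨_, rfl, h1⟩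

lemma forall₂_getLast? {R : G → G → Prop} {l l' : List G} (h : List.Forall₂ R l l') :
    ∀ x, l.getLast? = some x → ∃ y, l'.getLast? = some y ∧ R x y := by
  have hrev := List.rel_reverse h
  intro x hx
  obtain ⟨y, hy, hR⟩ := forall₂_head? hrev x (by rwa [List.head?_reverse])
  exact ⟨y, by rwa [List.head?_reverse] at hy, hR⟩

lemma push (hH : H = A ⊓ B) (hT : IsRightTransversalOf H A T)
    (hT' : IsRightTransversalOf H B T') (l : List G) (hAlt : Alt H A B l) :
    ∀ σ ∈ H, ∃ l' σ', IsNormalWord T T' l' ∧ σ' ∈ H ∧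
      σ * l.prod = l'.prod * σ' ∧ List.Forall₂ (Match H A B T T') l l' := by
  induction l with
  | nil =>
    intro σ hσ
    exact ⟨[], σ, ⟨by simp, List.isChain_nil⟩, hσ, by simp, List.Forall₂.nil⟩
  | cons x rest ih =>
    intro σ hσ
    have hx := hAlt.1 x (List.mem_cons_self)
    have hrest : Alt H A B rest :=
      ⟨fun z hz => hAlt.1 z (List.mem_cons_of_mem x hz), hAlt.2.tail⟩
    rcases hx with ⟨hxA, hxH⟩ | ⟨hxB, hxH⟩
    · -- x ∈ A \ H
      have hσA : σ ∈ A := by rw [hH] at hσ; exact hσ.1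
      have hσx : σ * x ∈ A := A.mul_mem hσA hxA
      have hσxH : σ * x ∉ H := fun hmem =>
        hxH (by simpa using H.mul_mem (H.inv_mem hσ) hmem)
      obtain ⟨t, σ₁, htT, hσ₁, heq, hne⟩ := exists_rep hT hσx
      have htne : t ≠ 1 := hne hσxH
      obtain ⟨l'', σ'', hl'', hσ'', hprod, hf⟩ := ih hrest σ₁ hσ₁
      have hrel : ∀ y ∈ l''.head?, (t ∈ T ∧ y ∈ T') ∨ (t ∈ T' ∧ y ∈ T) := by
        cases rest with
        | nil => cases hf; intro y hy; simp at hy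
        | cons z rs =>
          cases hf with
          | cons h1 h2 =>
            intro y hy
            simp only [List.head?_cons, Option.mem_def, Option.some.injEq] at hy
            subst hy
            have hxz := (List.isChain_cons_cons.1 hAlt.2).1
            have hzB : z ∈ B := by
              rcases hxz with ⟨-, hzB⟩ | ⟨hxB', -⟩
              · exact hzB
              · exact absurd (mem_of_mem_both hH hxA hxB') hxH
            rcases h1 with ⟨hzA, hzH, -, -⟩ | ⟨-, -, hyT', -⟩
            · exact absurd (mem_of_mem_both hH hzA hzB) hzH
            · exact Or.inl ⟨htT, hyT'⟩
      refine ⟨t :: l'', σ'', ?_, hσ'', ?_, List.Forall₂.cons (Or.inl ⟨hxA, hxH, htT, htne⟩) hf⟩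
      · constructor
        · rintro z hz
          rcases List.mem_cons.1 hz with rfl | hz
          · exact ⟨htne, Or.inl htT⟩
          · exact hl''.1 z hz
        · exact List.isChain_cons.2 ⟨hrel, hl''.2⟩
      · rw [List.prod_cons, List.prod_cons, ← mul_assoc, heq, mul_assoc, hprod, ← mul_assoc]
    · -- x ∈ B \ H
      have hσB : σ ∈ B := by rw [hH] at hσ; exact hσ.2
      have hσx : σ * x ∈ B := B.mul_mem hσB hxB
      have hσxH : σ * x ∉ H := fun hmem =>
        hxH (by simpa using H.mul_mem (H.inv_mem hσ) hmem)
      obtain ⟨t, σ₁, htT, hσ₁, heq, hne⟩ := exists_rep hT' hσx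
      have htne : t ≠ 1 := hne hσxH
      obtain ⟨l'', σ'', hl'', hσ'', hprod, hf⟩ := ih hrest σ₁ hσ₁
      have hrel : ∀ y ∈ l''.head?, (t ∈ T ∧ y ∈ T') ∨ (t ∈ T' ∧ y ∈ T) := by
        cases rest with
        | nil => cases hf; intro y hy; simp at hy
        | cons z rs =>
          cases hf with
          | cons h1 h2 =>
            intro y hy
            simp only [List.head?_cons, Option.mem_def, Option.some.injEq] at hy
            subst hy
            have hxz := (List.isChain_cons_cons.1 hAlt.2).1
            have hzA : z ∈ A := by
              rcases hxz with ⟨hxA', -⟩ | ⟨-, hzA⟩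
              · exact absurd (mem_of_mem_both hH hxA' hxB) hxH
              · exact hzA
            rcases h1 with ⟨-, -, hyT, -⟩ | ⟨hzB, hzH, -, -⟩
            · exact Or.inr ⟨htT, hyT⟩
            · exact absurd (mem_of_mem_both hH hzA hzB) hzH
      refine ⟨t :: l'', σ'', ?_, hσ'', ?_, List.Forall₂.cons (Or.inr ⟨hxB, hxH, htT, htne⟩) hf⟩
      · constructor
        · rintro z hz
          rcases List.mem_cons.1 hz with rfl | hz
          · exact ⟨htne, Or.inr htT⟩
          · exact hl''.1 z hz
        · exact List.isChain_cons.2 ⟨hrel, hl''.2⟩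
      · rw [List.prod_cons, List.prod_cons, ← mul_assoc, heq, mul_assoc, hprod, ← mul_assoc]
lemma nf_unique (hNF : HasUniqueNormalForms H T T') {l₁ l₂ : List G} {σ₁ σ₂ : G}
    (h₁ : IsNormalWord T T' l₁) (hσ₁ : σ₁ ∈ H) (h₂ : IsNormalWord T T' l₂) (hσ₂ : σ₂ ∈ H)
    (heq : l₁.prod * σ₁ = l₂.prod * σ₂) : l₁ = l₂ ∧ σ₁ = σ₂ := by
  have h := (hNF (l₁.prod * σ₁)).unique (y₁ := (l₁, σ₁)) (y₂ := (l₂, σ₂))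
    ⟨h₁, hσ₁, rfl⟩ ⟨h₂, hσ₂, heq⟩
  exact ⟨congrArg Prod.fst h, congrArg Prod.snd h⟩

lemma mem_amalgX_of {l : List G} {σ : G} (hl : IsNormalWord T T' l) (hσ : σ ∈ H) {t : G}
    (hh : l.head? = some t) (ht : t ∈ T) : l.prod * σ ∈ amalgX H T T' :=
  ⟨l, σ, hl, hσ, rfl, t, hh, ht⟩

lemma not_mem_amalgX_of (hH : H = A ⊓ B) (hT : IsRightTransversalOf H A T)
    (hT' : IsRightTransversalOf H B T') (hNF : HasUniqueNormalForms H T T')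
    {l : List G} {σ : G} (hl : IsNormalWord T T' l) (hσ : σ ∈ H)
    (hh : l.head? = none ∨ ∃ t, l.head? = some t ∧ t ∈ T') : l.prod * σ ∉ amalgX H T T' := by
  rintro ⟨l₂, σ₂, hl₂, hσ₂, heq, t₂, hh₂, ht₂⟩
  obtain ⟨rfl, -⟩ := nf_unique hNF hl hσ hl₂ hσ₂ heq
  rcases hh with hnone | ⟨t, hsome, htT'⟩
  · rw [hnone] at hh₂; cases hh₂
  · rw [hsome] at hh₂
    obtain rfl : t = t₂ := by injection hh₂
    have htmem : t ∈ l := List.mem_of_mem_head? (by rw [hsome]; rfl)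
    exact (hl.1 t htmem).1 (tv_inter hH hT hT' ht₂ htT')

lemma H_not_mem_amalgX (hH : H = A ⊓ B) (hT : IsRightTransversalOf H A T)
    (hT' : IsRightTransversalOf H B T') (hNF : HasUniqueNormalForms H T T')
    {h : G} (hh : h ∈ H) : h ∉ amalgX H T T' := by
  have := not_mem_amalgX_of hH hT hT' hNF (l := []) (σ := h)
    ⟨by simp, List.isChain_nil⟩ hh (Or.inl rfl)
  simpa using this

lemma mul_mem_amalgX (hH : H = A ⊓ B) (hT : IsRightTransversalOf H A T)
    (hT' : IsRightTransversalOf H B T') {h x : G} (hh : h ∈ H) (hx : x ∈ amalgX H T T') :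
    h * x ∈ amalgX H T T' := by
  obtain ⟨l, σ, hl, hσ, rfl, t, hhead, htT⟩ := hx
  obtain ⟨l', σ', hl', hσ', hprod, hf⟩ := push hH hT hT' l (normal_alt hH hT hT' hl) h hh
  obtain ⟨y, hy, hMatch⟩ := forall₂_head? hf t hhead
  refine ⟨l', σ' * σ, hl', H.mul_mem hσ' hσ, ?_, y, hy, ?_⟩
  · rw [← mul_assoc, hprod, mul_assoc]
  · rcases hMatch with ⟨-, -, hyT, -⟩ | ⟨htB, htH, -, -⟩
    · exact hyT
    · exact absurd (mem_of_mem_both hH (hT.1 htT) htB) htH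

lemma smul_amalgX (hH : H = A ⊓ B) (hT : IsRightTransversalOf H A T)
    (hT' : IsRightTransversalOf H B T') {h : G} (hh : h ∈ H) :
    h • amalgX H T T' = amalgX H T T' := by
  apply Set.eq_of_subset_of_subset
  · rintro _ ⟨y, hy, rfl⟩
    simpa [smul_eq_mul] using mul_mem_amalgX hH hT hT' hh hy
  · intro x hx
    exact ⟨h⁻¹ * x, mul_mem_amalgX hH hT hT' (H.inv_mem hh) hx, by simp [smul_eq_mul]⟩
lemma mul_letter (hH : H = A ⊓ B) (hT : IsRightTransversalOf H A T)
    (hT' : IsRightTransversalOf H B T') (l : List G) (hl : IsNormalWord T T' l)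
    (y : G) (hy : (y ∈ A ∧ y ∉ H) ∨ (y ∈ B ∧ y ∉ H)) :
    ∃ L σ', IsNormalWord T T' L ∧ σ' ∈ H ∧ l.prod * y = L.prod * σ' ∧
      l.length ≤ L.length + 1 ∧
      (2 ≤ l.length → L.head? = l.head?) ∧
      (∀ x, l.getLast? = some x →
        ((x ∈ T ∧ y ∈ B ∧ y ∉ H) ∨ (x ∈ T' ∧ y ∈ A ∧ y ∉ H)) → L.head? = l.head?) := by
  rcases l.eq_nil_or_concat' with rfl | ⟨init, x, rfl⟩
  · rcases hy with ⟨hyA, hyH⟩ | ⟨hyB, hyH⟩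
    · obtain ⟨t, σ, htT, hσ, heq, hne⟩ := exists_rep hT hyA
      refine ⟨[t], σ, ?_, hσ, by simpa using heq, by simp, by simp, by simp⟩
      refine ⟨?_, List.isChain_singleton t⟩
      rintro z hz
      rcases List.mem_singleton.1 hz with rfl
      exact ⟨hne hyH, Or.inl htT⟩
    · obtain ⟨t, σ, htT, hσ, heq, hne⟩ := exists_rep hT' hyB
      refine ⟨[t], σ, ?_, hσ, by simpa using heq, by simp, by simp, by simp⟩
      refine ⟨?_, List.isChain_singleton t⟩
      rintro z hz
      rcases List.mem_singleton.1 hz with rfl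
      exact ⟨hne hyH, Or.inr htT⟩
  · have hxl : x ∈ init ++ [x] := by simp
    obtain ⟨hxne, hxTT⟩ := hl.1 x hxl
    have hchain := hl.2
    rw [List.Chain', List.isChain_append] at hchain
    obtain ⟨hchain_init, -, hjunction⟩ := hchain
    have hinit : IsNormalWord T T' init :=
      ⟨fun z hz => hl.1 z (by simp [hz]), hchain_init⟩
    have hlastx : (init ++ [x]).getLast? = some x := List.getLast?_concat
    have hprodx : (init ++ [x]).prod = init.prod * x := by
      rw [List.prod_append, List.prod_singleton]
    -- helper facts
    have hhead_eq : init ≠ [] → (init ++ [x]).head? = init.head? :=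
      fun hne => List.head?_append_of_ne_nil _ hne
    rcases hxTT with hxT | hxT'
    · -- x ∈ T
      have hxA : x ∈ A := hT.1 hxT
      have hxH : x ∉ H := fun hmem => hxne (tv_eq_one hT hxT hmem)
      rcases hy with ⟨hyA, hyH⟩ | ⟨hyB, hyH⟩
      · -- same side A
        have hzA : x * y ∈ A := A.mul_mem hxA hyA
        have hnotopp : ∀ x', (init ++ [x]).getLast? = some x' →
            ((x' ∈ T ∧ y ∈ B ∧ y ∉ H) ∨ (x' ∈ T' ∧ y ∈ A ∧ y ∉ H)) → False := by
          intro x' hx' hopp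
          rw [hlastx] at hx'
          obtain rfl : x = x' := by injection hx'
          rcases hopp with ⟨-, hyB, hyH'⟩ | ⟨hxT'', -, -⟩
          · exact hyH' (mem_of_mem_both hH hyA hyB)
          · exact hxne (tv_inter hH hT hT' hxT hxT'')
        by_cases hzH : x * y ∈ H
        · refine ⟨init, x * y, hinit, hzH, ?_, by simp, ?_, fun x' h1 h2 => absurd h2 (by
            intro h2; exact hnotopp x' h1 h2)⟩
          · rw [hprodx, mul_assoc]
          · intro h2
            have hinitne : init ≠ [] := by
              intro h; subst h; simp at h2
            rw [hhead_eq hinitne]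
        · obtain ⟨t₂, σ₂, ht₂T, hσ₂, heq₂, hne₂⟩ := exists_rep hT hzA
          have ht₂ne : t₂ ≠ 1 := hne₂ hzH
          have hjunc2 : ∀ a ∈ init.getLast?, ∀ b ∈ [t₂].head?,
              (a ∈ T ∧ b ∈ T') ∨ (a ∈ T' ∧ b ∈ T) := by
            intro a ha b hb
            obtain rfl : t₂ = b := by simpa using hb
            have hax := hjunction a ha x (by simp)
            rcases hax with ⟨-, hxT''⟩ | ⟨haT', -⟩
            · exact absurd (tv_inter hH hT hT' hxT hxT'') hxne
            · exact Or.inr ⟨haT', ht₂T⟩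
          refine ⟨init ++ [t₂], σ₂, ?_, hσ₂, ?_, by simp, ?_, fun x' h1 h2 => absurd h2 (by
            intro h2; exact hnotopp x' h1 h2)⟩
          · refine ⟨?_, List.isChain_append.2 ⟨hchain_init, List.isChain_singleton t₂, hjunc2⟩⟩
            intro z hz
            rcases List.mem_append.1 hz with hz | hz
            · exact hinit.1 z hz
            · rcases List.mem_singleton.1 hz with rfl
              exact ⟨ht₂ne, Or.inl ht₂T⟩
          · rw [hprodx, mul_assoc, heq₂, List.prod_append, List.prod_singleton, mul_assoc]
          · intro h2
            have hinitne : init ≠ [] := by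
              intro h; subst h; simp at h2
            rw [hhead_eq hinitne, List.head?_append_of_ne_nil _ hinitne]
      · -- opposite sides: x ∈ T, y ∈ B \ H
        obtain ⟨t₂, σ₂, ht₂T, hσ₂, heq₂, hne₂⟩ := exists_rep hT' hyB
        have ht₂ne : t₂ ≠ 1 := hne₂ hyH
        have hLne : init ++ [x] ≠ [] := by simp
        have hheadL : ((init ++ [x]) ++ [t₂]).head? = (init ++ [x]).head? :=
          List.head?_append_of_ne_nil _ hLne
        have hjunc2 : ∀ a ∈ (init ++ [x]).getLast?, ∀ b ∈ [t₂].head?,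
            (a ∈ T ∧ b ∈ T') ∨ (a ∈ T' ∧ b ∈ T) := by
          intro a ha b hb
          rw [hlastx] at ha
          obtain rfl : x = a := by injection ha
          obtain rfl : t₂ = b := by simpa using hb
          exact Or.inl ⟨hxT, ht₂T⟩
        refine ⟨(init ++ [x]) ++ [t₂], σ₂, ?_, hσ₂, ?_, by simp, fun _ => hheadL,
          fun _ _ _ => hheadL⟩
        · refine ⟨?_, List.isChain_append.2 ⟨hl.2, List.isChain_singleton t₂, hjunc2⟩⟩
          intro z hz
          rcases List.mem_append.1 hz with hz | hz
          · exact hl.1 z hz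
          · rcases List.mem_singleton.1 hz with rfl
            exact ⟨ht₂ne, Or.inr ht₂T⟩
        · rw [heq₂]; simp [List.prod_append, mul_assoc]
    · -- x ∈ T'
      have hxB : x ∈ B := hT'.1 hxT'
      have hxH : x ∉ H := fun hmem => hxne (tv_eq_one hT' hxT' hmem)
      rcases hy with ⟨hyA, hyH⟩ | ⟨hyB, hyH⟩
      · -- opposite sides: x ∈ T', y ∈ A \ H
        obtain ⟨t₂, σ₂, ht₂T, hσ₂, heq₂, hne₂⟩ := exists_rep hT hyA
        have ht₂ne : t₂ ≠ 1 := hne₂ hyH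
        have hLne : init ++ [x] ≠ [] := by simp
        have hheadL : ((init ++ [x]) ++ [t₂]).head? = (init ++ [x]).head? :=
          List.head?_append_of_ne_nil _ hLne
        have hjunc2 : ∀ a ∈ (init ++ [x]).getLast?, ∀ b ∈ [t₂].head?,
            (a ∈ T ∧ b ∈ T') ∨ (a ∈ T' ∧ b ∈ T) := by
          intro a ha b hb
          rw [hlastx] at ha
          obtain rfl : x = a := by injection ha
          obtain rfl : t₂ = b := by simpa using hb
          exact Or.inr ⟨hxT', ht₂T⟩
        refine ⟨(init ++ [x]) ++ [t₂], σ₂, ?_, hσ₂, ?_, by simp, fun _ => hheadL,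
          fun _ _ _ => hheadL⟩
        · refine ⟨?_, List.isChain_append.2 ⟨hl.2, List.isChain_singleton t₂, hjunc2⟩⟩
          intro z hz
          rcases List.mem_append.1 hz with hz | hz
          · exact hl.1 z hz
          · rcases List.mem_singleton.1 hz with rfl
            exact ⟨ht₂ne, Or.inl ht₂T⟩
        · rw [heq₂]; simp [List.prod_append, mul_assoc]
      · -- same side B
        have hzB : x * y ∈ B := B.mul_mem hxB hyB
        have hnotopp : ∀ x', (init ++ [x]).getLast? = some x' →
            ((x' ∈ T ∧ y ∈ B ∧ y ∉ H) ∨ (x' ∈ T' ∧ y ∈ A ∧ y ∉ H)) → False := by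
          intro x' hx' hopp
          rw [hlastx] at hx'
          obtain rfl : x = x' := by injection hx'
          rcases hopp with ⟨hxT'', -, -⟩ | ⟨-, hyA, hyH'⟩
          · exact hxne (tv_inter hH hT hT' hxT'' hxT')
          · exact hyH' (mem_of_mem_both hH hyA hyB)
        by_cases hzH : x * y ∈ H
        · refine ⟨init, x * y, hinit, hzH, ?_, by simp, ?_, fun x' h1 h2 => absurd h2 (by
            intro h2; exact hnotopp x' h1 h2)⟩
          · rw [hprodx, mul_assoc]
          · intro h2
            have hinitne : init ≠ [] := by
              intro h; subst h; simp at h2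
            rw [hhead_eq hinitne]
        · obtain ⟨t₂, σ₂, ht₂T, hσ₂, heq₂, hne₂⟩ := exists_rep hT' hzB
          have ht₂ne : t₂ ≠ 1 := hne₂ hzH
          have hjunc2 : ∀ a ∈ init.getLast?, ∀ b ∈ [t₂].head?,
              (a ∈ T ∧ b ∈ T') ∨ (a ∈ T' ∧ b ∈ T) := by
            intro a ha b hb
            obtain rfl : t₂ = b := by simpa using hb
            have hax := hjunction a ha x (by simp)
            rcases hax with ⟨haT, -⟩ | ⟨-, hxT''⟩
            · exact Or.inl ⟨haT, ht₂T⟩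
            · exact absurd (tv_inter hH hT hT' hxT'' hxT') hxne
          refine ⟨init ++ [t₂], σ₂, ?_, hσ₂, ?_, by simp, ?_, fun x' h1 h2 => absurd h2 (by
            intro h2; exact hnotopp x' h1 h2)⟩
          · refine ⟨?_, List.isChain_append.2 ⟨hchain_init, List.isChain_singleton t₂, hjunc2⟩⟩
            intro z hz
            rcases List.mem_append.1 hz with hz | hz
            · exact hinit.1 z hz
            · rcases List.mem_singleton.1 hz with rfl
              exact ⟨ht₂ne, Or.inr ht₂T⟩
          · rw [hprodx, mul_assoc, heq₂, List.prod_append, List.prod_singleton, mul_assoc]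
          · intro h2
            have hinitne : init ≠ [] := by
              intro h; subst h; simp at h2
            rw [hhead_eq hinitne, List.head?_append_of_ne_nil _ hinitne]
lemma prod_prod (hH : H = A ⊓ B) (hT : IsRightTransversalOf H A T)
    (hT' : IsRightTransversalOf H B T') :
    ∀ (n : ℕ) (l₁ l₂ : List G), IsNormalWord T T' l₁ → IsNormalWord T T' l₂ →
      l₂.length ≤ n →
    ∃ L σ, IsNormalWord T T' L ∧ σ ∈ H ∧ l₁.prod * l₂.prod = L.prod * σ ∧
      l₁.length ≤ L.length + l₂.length ∧
      (l₂.length + 2 ≤ l₁.length → L.head? = l₁.head?) := by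
  intro n
  induction n with
  | zero =>
    intro l₁ l₂ h₁ h₂ hlen
    obtain rfl : l₂ = [] := List.length_eq_zero_iff.1 (Nat.le_zero.1 hlen)
    exact ⟨l₁, 1, h₁, H.one_mem, by simp, by simp, fun _ => rfl⟩
  | succ n ih =>
    intro l₁ l₂ h₁ h₂ hlen
    cases l₂ with
    | nil => exact ⟨l₁, 1, h₁, H.one_mem, by simp, by simp, fun _ => rfl⟩
    | cons y rest =>
      have hy := normal_letter_side hH hT hT' h₂ (List.mem_cons_self)
      have hrest : IsNormalWord T T' rest :=
        ⟨fun z hz => h₂.1 z (List.mem_cons_of_mem _ hz), h₂.2.tail⟩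
      obtain ⟨L₁, σ₁, hL₁, hσ₁, hp₁, hlen₁, hhead₁, -⟩ := mul_letter hH hT hT' l₁ h₁ y hy
      obtain ⟨rest₂, σ₂, hrest₂, hσ₂, hp₂, hf₂⟩ :=
        push hH hT hT' rest (normal_alt hH hT hT' hrest) σ₁ hσ₁
      have hlen_eq : rest₂.length = rest.length := hf₂.length_eq.symm
      have hlenr : rest₂.length ≤ n := by
        simp only [List.length_cons] at hlen; omega
      obtain ⟨L, σ₃, hL, hσ₃, hp₃, hlen₃, hhead₃⟩ := ih L₁ rest₂ hL₁ hrest₂ hlenr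
      refine ⟨L, σ₃ * σ₂, hL, H.mul_mem hσ₃ hσ₂, ?_, ?_, ?_⟩
      · rw [List.prod_cons, ← mul_assoc, hp₁, mul_assoc, hp₂, ← mul_assoc, hp₃, mul_assoc]
      · simp only [List.length_cons]; omega
      · intro hbig
        simp only [List.length_cons] at hbig
        have e1 := hhead₁ (by omega)
        have e2 := hhead₃ (by omega)
        rw [e2, e1]

lemma mul_nf (hH : H = A ⊓ B) (hT : IsRightTransversalOf H A T)
    (hT' : IsRightTransversalOf H B T') {l₁ l₂ : List G} {σ₁ σ₂ : G}
    (h₁ : IsNormalWord T T' l₁) (hσ₁ : σ₁ ∈ H) (h₂ : IsNormalWord T T' l₂) (hσ₂ : σ₂ ∈ H)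
    (hlen : l₂.length + 2 ≤ l₁.length) :
    ∃ L σ, IsNormalWord T T' L ∧ σ ∈ H ∧
      (l₁.prod * σ₁) * (l₂.prod * σ₂) = L.prod * σ ∧ L.head? = l₁.head? := by
  obtain ⟨l₂', σ', h₂', hσ', hp', hf'⟩ :=
    push hH hT hT' l₂ (normal_alt hH hT hT' h₂) σ₁ hσ₁
  have hlen' : l₂'.length = l₂.length := hf'.length_eq.symm
  obtain ⟨L, σ₃, hL, hσ₃, hp₃, -, hhead⟩ :=
    prod_prod hH hT hT' l₂'.length l₁ l₂' h₁ h₂' le_rfl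
  refine ⟨L, σ₃ * (σ' * σ₂), hL, H.mul_mem hσ₃ (H.mul_mem hσ' hσ₂), ?_, hhead (by omega)⟩
  rw [show (l₁.prod * σ₁) * (l₂.prod * σ₂) = l₁.prod * (σ₁ * l₂.prod) * σ₂ by group, hp',
    show l₁.prod * (l₂'.prod * σ') * σ₂ = (l₁.prod * l₂'.prod) * (σ' * σ₂) by group, hp₃,
    mul_assoc]

lemma inv_nf (hH : H = A ⊓ B) (hT : IsRightTransversalOf H A T)
    (hT' : IsRightTransversalOf H B T') {l : List G} {σ : G}
    (hl : IsNormalWord T T' l) (hσ : σ ∈ H) :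
    ∃ L σ', IsNormalWord T T' L ∧ σ' ∈ H ∧ (l.prod * σ)⁻¹ = L.prod * σ' ∧
      L.length = l.length ∧
      (∀ x yy, l.getLast? = some x → L.head? = some yy →
        ((x ∈ T ∧ yy ∈ T ∧ yy ≠ 1) ∨ (x ∈ T' ∧ yy ∈ T' ∧ yy ≠ 1))) ∧
      (∀ x yy, l.head? = some x → L.getLast? = some yy →
        ((x ∈ T ∧ yy ∈ T ∧ yy ≠ 1) ∨ (x ∈ T' ∧ yy ∈ T' ∧ yy ≠ 1))) := by
  set m : List G := (l.map fun z => z⁻¹).reverse with hm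
  have halt : Alt H A B m := by
    constructor
    · intro z hz
      rw [hm, List.mem_reverse, List.mem_map] at hz
      obtain ⟨w, hwl, rfl⟩ := hz
      rcases normal_letter_side hH hT hT' hl hwl with ⟨hwA, hwH⟩ | ⟨hwB, hwH⟩
      · exact Or.inl ⟨A.inv_mem hwA, fun hmem => hwH (by simpa using H.inv_mem hmem)⟩
      · exact Or.inr ⟨B.inv_mem hwB, fun hmem => hwH (by simpa using H.inv_mem hmem)⟩
    · rw [hm, List.Chain', List.isChain_reverse]
      rw [List.isChain_map]
      refine hl.2.imp ?_
      rintro a b (⟨haT, hbT'⟩ | ⟨haT', hbT⟩)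
      · exact Or.inr ⟨B.inv_mem (hT'.1 hbT'), A.inv_mem (hT.1 haT)⟩
      · exact Or.inl ⟨A.inv_mem (hT.1 hbT), B.inv_mem (hT'.1 haT')⟩
  obtain ⟨L, σ', hL, hσ', hp, hf⟩ := push hH hT hT' m halt σ⁻¹ (H.inv_mem hσ)
  have hminv : (l.prod * σ)⁻¹ = σ⁻¹ * m.prod := by
    rw [mul_inv_rev, hm, List.prod_inv_reverse]
  have hmlen : m.length = l.length := by simp [hm]
  have hmhead : m.head? = (l.getLast?).map fun z => z⁻¹ := by
    rw [hm, List.head?_reverse, List.getLast?_map]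
  have hmlast : m.getLast? = (l.head?).map fun z => z⁻¹ := by
    rw [hm, ← List.head?_reverse, List.reverse_reverse, List.head?_map]
  refine ⟨L, σ', hL, hσ', by rw [hminv, hp], by rw [← hf.length_eq, hmlen], ?_, ?_⟩
  · intro x yy hx hyy
    have hxl : x ∈ l := List.mem_of_mem_getLast? (by rw [hx]; rfl)
    obtain ⟨hxne, hxTT⟩ := hl.1 x hxl
    have hmx : m.head? = some x⁻¹ := by rw [hmhead, hx]; rfl
    obtain ⟨y', hy', hMatch⟩ := forall₂_head? hf x⁻¹ hmx
    obtain rfl : y' = yy := by rw [hy'] at hyy; injection hyy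
    rcases hxTT with hxT | hxT'
    · rcases hMatch with ⟨-, -, hyT, hyne⟩ | ⟨hB, hH', -, -⟩
      · exact Or.inl ⟨hxT, hyT, hyne⟩
      · exact absurd (mem_of_mem_both hH (A.inv_mem (hT.1 hxT)) hB) hH'
    · rcases hMatch with ⟨hA', hH', -, -⟩ | ⟨-, -, hyT', hyne⟩
      · exact absurd (mem_of_mem_both hH hA' (B.inv_mem (hT'.1 hxT'))) hH'
      · exact Or.inr ⟨hxT', hyT', hyne⟩
  · intro x yy hx hyy
    have hxl : x ∈ l := List.mem_of_mem_head? (by rw [hx]; rfl)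
    obtain ⟨hxne, hxTT⟩ := hl.1 x hxl
    have hmx : m.getLast? = some x⁻¹ := by rw [hmlast, hx]; rfl
    obtain ⟨y', hy', hMatch⟩ := forall₂_getLast? hf x⁻¹ hmx
    obtain rfl : y' = yy := by rw [hy'] at hyy; injection hyy
    rcases hxTT with hxT | hxT'
    · rcases hMatch with ⟨-, -, hyT, hyne⟩ | ⟨hB, hH', -, -⟩
      · exact Or.inl ⟨hxT, hyT, hyne⟩
      · exact absurd (mem_of_mem_both hH (A.inv_mem (hT.1 hxT)) hB) hH'
    · rcases hMatch with ⟨hA', hH', -, -⟩ | ⟨-, -, hyT', hyne⟩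
      · exact absurd (mem_of_mem_both hH hA' (B.inv_mem (hT'.1 hxT'))) hH'
      · exact Or.inr ⟨hxT', hyT', hyne⟩
lemma pow_nf (hH : H = A ⊓ B) (hT : IsRightTransversalOf H A T)
    (hT' : IsRightTransversalOf H B T') {μ : G} {w : List G} {σ : G}
    (hw : IsNormalWord T T' w) (hσ : σ ∈ H) (hμ : μ = w.prod * σ)
    {a : G} (hha : w.head? = some a) (haT : a ∈ T)
    {e : G} (hle : w.getLast? = some e) (heT' : e ∈ T') :
    ∀ n : ℕ, 1 ≤ n → ∃ W σₙ, IsNormalWord T T' W ∧ σₙ ∈ H ∧ μ ^ n = W.prod * σₙ ∧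
      W.length = n * w.length ∧ W.head? = some a ∧
      ∃ e', W.getLast? = some e' ∧ e' ∈ T' := by
  intro n hn
  induction n, hn using Nat.le_induction with
  | base =>
    exact ⟨w, σ, hw, hσ, by simpa [pow_one] using hμ, (one_mul _).symm, hha, e, hle, heT'⟩
  | succ n hn ih =>
    obtain ⟨W, σₙ, hW, hσₙ, hp, hlen, hhead, e', hlast, he'⟩ := ih
    obtain ⟨w₂, σ₂, hw₂, hσ₂, hp₂, hf₂⟩ :=
      push hH hT hT' w (normal_alt hH hT hT' hw) σₙ hσₙ
    obtain ⟨q₀, hq₀, hMq⟩ := forall₂_head? hf₂ a hha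
    have hq₀T : q₀ ∈ T ∧ q₀ ≠ 1 := by
      rcases hMq with ⟨-, -, h1, h2⟩ | ⟨hB, hHn, -, -⟩
      · exact ⟨h1, h2⟩
      · exact absurd (mem_of_mem_both hH (hT.1 haT) hB) hHn
    have hw₂ne : w₂ ≠ [] := by
      intro hnil; rw [hnil] at hq₀; cases hq₀
    have hWne : W ≠ [] := by
      intro hnil; rw [hnil] at hhead; cases hhead
    have hjunc : ∀ p ∈ W.getLast?, ∀ q ∈ w₂.head?,
        (p ∈ T ∧ q ∈ T') ∨ (p ∈ T' ∧ q ∈ T) := by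
      intro p hp' q hq'
      obtain rfl : e' = p := by rw [hlast] at hp'; injection hp'
      obtain rfl : q₀ = q := by rw [hq₀] at hq'; injection hq'
      exact Or.inr ⟨he', hq₀T.1⟩
    have hWw : IsNormalWord T T' (W ++ w₂) := by
      constructor
      · intro z hz
        rcases List.mem_append.1 hz with hz | hz
        · exact hW.1 z hz
        · exact hw₂.1 z hz
      · exact List.isChain_append.2 ⟨hW.2, hw₂.2, hjunc⟩
    obtain ⟨e₂, he₂, hMe₂⟩ := forall₂_getLast? hf₂ e hle
    have he₂T' : e₂ ∈ T' := by
      rcases hMe₂ with ⟨hA', hHn, -, -⟩ | ⟨-, -, h1, -⟩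
      · exact absurd (mem_of_mem_both hH hA' (hT'.1 heT')) hHn
      · exact h1
    refine ⟨W ++ w₂, σ₂ * σ, hWw, H.mul_mem hσ₂ hσ, ?_, ?_, ?_, ?_⟩
    · have key : (W.prod * σₙ) * (w.prod * σ) = (W.prod * w₂.prod) * (σ₂ * σ) := by
        rw [show (W.prod * σₙ) * (w.prod * σ) = W.prod * (σₙ * w.prod) * σ by group, hp₂]
        group
      rw [pow_succ, hp, hμ, key, List.prod_append]
    · rw [List.length_append, hlen, ← hf₂.length_eq]; ring
    · rw [List.head?_append_of_ne_nil _ hWne, hhead]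
    · exact ⟨e₂, by rw [List.getLast?_append_of_ne_nil _ hw₂ne, he₂], he₂T'⟩
lemma mu_master (hH : H = A ⊓ B) (hA : H < A) (hB : H < B)
    (hT : IsRightTransversalOf H A T) (hT' : IsRightTransversalOf H B T')
    (hNF : HasUniqueNormalForms H T T')
    {μ : G} (hμY : μ • amalgX H T T' ⊂ amalgX H T T') :
    (∀ n : ℕ, 1 ≤ n → μ ^ n ∈ amalgX H T T' ∧ μ ^ n ∉ H ∧
      (μ ^ n)⁻¹ ∉ amalgX H T T') ∧
    (∀ g : G, ∃ N : ℕ, ∀ n, N ≤ n →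
      μ ^ n * g ∈ amalgX H T T' ∧ (μ ^ n)⁻¹ * g ∉ amalgX H T T') := by
  have hsub : ∀ y ∈ amalgX H T T', μ * y ∈ amalgX H T T' := by
    intro y hy
    have := hμY.subset (Set.smul_mem_smul_set hy)
    simpa [smul_eq_mul] using this
  have hμH : μ ∉ H := fun hmem => (ne_of_ssubset hμY) (smul_amalgX hH hT hT' hmem)
  obtain ⟨⟨w, σ⟩, ⟨hw, hσ, hμeq⟩, -⟩ := hNF μ
  simp only at hw hσ hμeq
  have hwne : w ≠ [] := by
    intro h
    exact hμH (by rw [hμeq, h]; simpa using hσ)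
  have hwpos : 0 < w.length := List.length_pos_iff.2 hwne
  obtain ⟨a, wrest, hwcons⟩ := List.exists_cons_of_ne_nil hwne
  have hha : w.head? = some a := by rw [hwcons]; rfl
  have haw : a ∈ w := List.mem_of_mem_head? (by rw [hha]; rfl)
  have hane : a ≠ 1 := (hw.1 a haw).1
  set e := w.getLast hwne with he
  have hle : w.getLast? = some e := List.getLast?_eq_getLast_of_ne_nil hwne
  have hew : e ∈ w := List.getLast_mem hwne
  have hene : e ≠ 1 := (hw.1 e hew).1
  -- a nontrivial T-representative
  obtain ⟨a₀, ha₀A, ha₀H⟩ := SetLike.exists_of_lt hA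
  obtain ⟨t, σ₀, htT, -, -, hnet⟩ := exists_rep hT ha₀A
  have htne : t ≠ 1 := hnet ha₀H
  have htH : t ∉ H := fun hm => htne (tv_eq_one hT htT hm)
  have htnorm : IsNormalWord T T' [t] := by
    refine ⟨?_, List.isChain_singleton t⟩
    rintro z hz; rcases List.mem_singleton.1 hz with rfl; exact ⟨htne, Or.inl htT⟩
  have htY : t ∈ amalgX H T T' := by
    simpa using mem_amalgX_of (σ := 1) htnorm H.one_mem (t := t) rfl htT
  -- a nontrivial T'-representative
  obtain ⟨b₀, hb₀B, hb₀H⟩ := SetLike.exists_of_lt hB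
  obtain ⟨t', σ₀', ht'T, -, -, hnet'⟩ := exists_rep hT' hb₀B
  have ht'ne : t' ≠ 1 := hnet' hb₀H
  have ht'H : t' ∉ H := fun hm => ht'ne (tv_eq_one hT' ht'T hm)
  have ht'norm : IsNormalWord T T' [t'] := by
    refine ⟨?_, List.isChain_singleton t'⟩
    rintro z hz; rcases List.mem_singleton.1 hz with rfl; exact ⟨ht'ne, Or.inr ht'T⟩
  have ht'Y : t' ∉ amalgX H T T' := by
    have := not_mem_amalgX_of hH hT hT' hNF (σ := 1) ht'norm H.one_mem
      (Or.inr ⟨t', rfl, ht'T⟩)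
    simpa using this
  -- first letter of w is in T
  have haT : a ∈ T := by
    by_contra haT
    have haT' : a ∈ T' := by rcases (hw.1 a haw).2 with h | h; exact absurd h haT; exact h
    have h1 : μ * t ∈ amalgX H T T' := hsub t htY
    have hσA : σ ∈ A := by rw [hH] at hσ; exact hσ.1
    have hσtA : σ * t ∈ A := A.mul_mem hσA (hT.1 htT)
    have hσtH : σ * t ∉ H := fun hm => htH (by simpa using H.mul_mem (H.inv_mem hσ) hm)
    obtain ⟨L, σ', hL, hσ', hpL, -, hhead2, hheadopp⟩ :=
      mul_letter hH hT hT' w hw (σ * t) (Or.inl ⟨hσtA, hσtH⟩)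
    have hheadL : L.head? = some a := by
      by_cases h2 : 2 ≤ w.length
      · rw [hhead2 h2, hha]
      · have hlen1 : w.length = 1 := by omega
        obtain ⟨z, hz⟩ := List.length_eq_one_iff.1 hlen1
        have hza : w = [a] := by
          rw [hz] at hha ⊢
          injection hha with hh
          rw [hh]
        rw [hheadopp a (by rw [hza]; rfl) (Or.inr ⟨haT', hσtA, hσtH⟩), hha]
    have h2 : μ * t = L.prod * σ' := by
      rw [hμeq, mul_assoc, hpL]
    exact not_mem_amalgX_of hH hT hT' hNF hL hσ' (Or.inr ⟨a, hheadL, haT'⟩) (h2 ▸ h1)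
  -- last letter of w is in T'
  have heT' : e ∈ T' := by
    by_contra heT'
    have heT : e ∈ T := by rcases (hw.1 e hew).2 with h | h; exact h; exact absurd h heT'
    obtain ⟨L, σ', hL, hσ', hpinv, hlenL, hlast_head, hhead_last⟩ := inv_nf hH hT hT' hw hσ
    have hLne : L ≠ [] := by
      intro hnil; rw [hnil] at hlenL; simp at hlenL; omega
    obtain ⟨y₀, L₀, hLcons⟩ := List.exists_cons_of_ne_nil hLne
    have hy₀hd : L.head? = some y₀ := by rw [hLcons]; rfl
    have hy₀ : y₀ ∈ T ∧ y₀ ≠ 1 := by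
      rcases hlast_head e y₀ hle hy₀hd with ⟨-, h1, h2⟩ | ⟨heT'', -, -⟩
      · exact ⟨h1, h2⟩
      · exact absurd heT'' heT'
    have hLlne : L.getLast? = some (L.getLast hLne) := List.getLast?_eq_getLast_of_ne_nil hLne
    set y₁ := L.getLast hLne with hy₁def
    have hy₁ : y₁ ∈ T ∧ y₁ ≠ 1 := by
      rcases hhead_last a y₁ hha hLlne with ⟨-, h1, h2⟩ | ⟨haT'', -, -⟩
      · exact ⟨h1, h2⟩
      · exact absurd (tv_inter hH hT hT' haT haT'') hane
    have hσ'B : σ' ∈ B := by rw [hH] at hσ'; exact hσ'.2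
    have hyB : σ' * t' ∈ B := B.mul_mem hσ'B (hT'.1 ht'T)
    have hyH : σ' * t' ∉ H := fun hm => ht'H (by simpa using H.mul_mem (H.inv_mem hσ') hm)
    obtain ⟨L₂, σ₂, hL₂, hσ₂, hp₂, -, -, hopp⟩ :=
      mul_letter hH hT hT' L hL (σ' * t') (Or.inr ⟨hyB, hyH⟩)
    have hheadL₂ : L₂.head? = some y₀ := by
      rw [hopp y₁ hLlne (Or.inl ⟨hy₁.1, hyB, hyH⟩), hy₀hd]
    have hmem : μ⁻¹ * t' ∈ amalgX H T T' := by
      have heq : μ⁻¹ * t' = L₂.prod * σ₂ := by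
        rw [hμeq, hpinv, mul_assoc, hp₂]
      rw [heq]
      exact mem_amalgX_of hL₂ hσ₂ hheadL₂ hy₀.1
    have := hsub _ hmem
    rw [mul_inv_cancel_left] at this
    exact ht'Y this
  -- powers
  have pw := pow_nf hH hT hT' hw hσ hμeq hha haT hle heT'
  have P1 : ∀ n : ℕ, 1 ≤ n → μ ^ n ∈ amalgX H T T' ∧ μ ^ n ∉ H ∧
      (μ ^ n)⁻¹ ∉ amalgX H T T' := by
    intro n hn
    obtain ⟨W, σₙ, hW, hσₙ, hp, hlenW, hheadW, e', hlastW, he'T'⟩ := pw n hn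
    have hWne : W ≠ [] := by intro hnil; rw [hnil] at hheadW; cases hheadW
    refine ⟨?_, ?_, ?_⟩
    · rw [hp]; exact mem_amalgX_of hW hσₙ hheadW haT
    · intro hmem
      obtain ⟨hWnil, -⟩ := nf_unique hNF hW hσₙ
        (l₂ := []) (σ₂ := μ ^ n) ⟨by simp, List.isChain_nil⟩ hmem (by rw [← hp]; simp)
      rw [hWnil] at hheadW; cases hheadW
    · obtain ⟨L, σ', hL, hσ', hpinv, hlenL, hlast_head, -⟩ := inv_nf hH hT hT' hW hσₙ
      have hLne : L ≠ [] := by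
        intro hnil; rw [hnil] at hlenL
        exact hWne (List.length_eq_zero_iff.1 hlenL.symm)
      obtain ⟨y₀, L₀, hLcons⟩ := List.exists_cons_of_ne_nil hLne
      have hy₀hd : L.head? = some y₀ := by rw [hLcons]; rfl
      have he'ne : e' ≠ 1 :=
        (hW.1 e' (List.mem_of_mem_getLast? (by rw [hlastW]; rfl))).1
      have hy₀ : y₀ ∈ T' := by
        rcases hlast_head e' y₀ hlastW hy₀hd with ⟨he'T, -, -⟩ | ⟨-, h1, -⟩
        · exact absurd (tv_inter hH hT hT' he'T he'T') he'ne
        · exact h1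
      have heq : (μ ^ n)⁻¹ = L.prod * σ' := by rw [hp, hpinv]
      rw [heq]
      exact not_mem_amalgX_of hH hT hT' hNF hL hσ' (Or.inr ⟨y₀, hy₀hd, hy₀⟩)
  refine ⟨P1, ?_⟩
  intro g
  obtain ⟨⟨l₀, σ₀⟩, ⟨hl₀, hσ₀, hg⟩, -⟩ := hNF g
  simp only at hl₀ hσ₀ hg
  refine ⟨l₀.length + 2, ?_⟩
  intro n hnN
  have hn1 : 1 ≤ n := by omega
  obtain ⟨W, σₙ, hW, hσₙ, hp, hlenW, hheadW, e', hlastW, he'T'⟩ := pw n hn1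
  have hWne : W ≠ [] := by intro hnil; rw [hnil] at hheadW; cases hheadW
  have hnk : n ≤ W.length := by
    rw [hlenW]; exact Nat.le_mul_of_pos_right n hwpos
  have hlenok : l₀.length + 2 ≤ W.length := le_trans hnN hnk
  constructor
  · obtain ⟨L, σ₃, hL, hσ₃, hp₃, hhead₃⟩ := mul_nf hH hT hT' hW hσₙ hl₀ hσ₀ hlenok
    have heq : μ ^ n * g = L.prod * σ₃ := by rw [hp, hg, hp₃]
    rw [heq]
    exact mem_amalgX_of hL hσ₃ (by rw [hhead₃, hheadW]) haT
  · obtain ⟨L, σ', hL, hσ', hpinv, hlenL, hlast_head, -⟩ := inv_nf hH hT hT' hW hσₙ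
    have hLne : L ≠ [] := by
      intro hnil; rw [hnil] at hlenL
      exact hWne (List.length_eq_zero_iff.1 hlenL.symm)
    obtain ⟨y₀, L₀, hLcons⟩ := List.exists_cons_of_ne_nil hLne
    have hy₀hd : L.head? = some y₀ := by rw [hLcons]; rfl
    have he'ne : e' ≠ 1 :=
      (hW.1 e' (List.mem_of_mem_getLast? (by rw [hlastW]; rfl))).1
    have hy₀ : y₀ ∈ T' := by
      rcases hlast_head e' y₀ hlastW hy₀hd with ⟨he'T, -, -⟩ | ⟨-, h1, -⟩
      · exact absurd (tv_inter hH hT hT' he'T he'T') he'ne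
      · exact h1
    have hlenok₂ : l₀.length + 2 ≤ L.length := by rw [hlenL]; exact hlenok
    obtain ⟨L₂, σ₃, hL₂, hσ₃, hp₃, hhead₃⟩ := mul_nf hH hT hT' hL hσ' hl₀ hσ₀ hlenok₂
    have heq : (μ ^ n)⁻¹ * g = L₂.prod * σ₃ := by rw [hp, hg, hpinv, hp₃]
    rw [heq]
    exact not_mem_amalgX_of hH hT hT' hNF hL₂ hσ₃
      (Or.inr ⟨y₀, by rw [hhead₃, hy₀hd], hy₀⟩)
lemma pow_coset_inj {μ : G} (K : Subgroup G) (hK : ∀ m : ℕ, 1 ≤ m → μ ^ m ∉ K)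
    {i j : ℕ} (h : μ ^ i * (μ ^ j)⁻¹ ∈ K) : i = j := by
  rcases Nat.lt_trichotomy i j with hlt | heq | hlt
  · exfalso
    apply hK (j - i) (by omega)
    have e : μ ^ (j - i) * μ ^ i = μ ^ j := by rw [← pow_add]; congr 1; omega
    have : μ ^ (j - i) = (μ ^ i * (μ ^ j)⁻¹)⁻¹ := by
      rw [mul_inv_rev, inv_inv, ← e, mul_assoc, mul_inv_cancel, mul_one]
    rw [this]
    exact K.inv_mem h
  · exact heq
  · exfalso
    apply hK (i - j) (by omega)
    have e : μ ^ (i - j) * μ ^ j = μ ^ i := by rw [← pow_add]; congr 1; omega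
    have : μ ^ (i - j) = μ ^ i * (μ ^ j)⁻¹ := by
      rw [← e, mul_assoc, mul_inv_cancel, mul_one]
    rw [this]
    exact h
end AFPAux

namespace AFPAux

lemma infinite_rproj {G : Type*} [Group G] (K : Subgroup G) (S : Set G) (f : ℕ → G)
    (hmem : ∀ n, f n ∈ S) (hinj : ∀ m n : ℕ, f n * (f m)⁻¹ ∈ K → m = n) :
    (rproj K S).Infinite := by
  apply Set.infinite_of_injective_forall_mem
    (f := fun n : ℕ => Quotient.mk (QuotientGroup.rightRel K) (f n))
  case hi =>
    intro m n h
    have h2 := Quotient.exact h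
    exact hinj m n (QuotientGroup.rightRel_apply.mp h2)
  case hf =>
    intro n
    exact ⟨f n, hmem n, rfl⟩

end AFPAux

theorem crosses_of_exists_strict_translate {G : Type*} [Group G] [Group.FG G]
    (Lam Sg A1 B1 A2 B2 : Subgroup G) (hLfg : Lam.FG) (hSfg : Sg.FG)
    -- `G = A₁ ∗_Λ B₁` with `Λ` proper in `A₁` and `B₁`:
    (hA1 : Lam < A1) (hB1 : Lam < B1) (hLam : Lam = A1 ⊓ B1)
    (T1 T1' : Set G)
    (hT1 : IsRightTransversalOf Lam A1 T1) (hT1' : IsRightTransversalOf Lam B1 T1')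
    (hNF1 : HasUniqueNormalForms Lam T1 T1')
    -- `G = A₂ ∗_Σ B₂` with `Σ` proper in `A₂` and `B₂`:
    (hA2 : Sg < A2) (hB2 : Sg < B2) (hSg : Sg = A2 ⊓ B2)
    (T2 T2' : Set G)
    (hT2 : IsRightTransversalOf Sg A2 T2) (hT2' : IsRightTransversalOf Sg B2 T2')
    (hNF2 : HasUniqueNormalForms Sg T2 T2')
    -- `X` and `Y` are the almost invariant sets associated to the two splittings:
    (X Y : Set G) (hX : X = amalgX Lam T1 T1') (hY : Y = amalgX Sg T2 T2')
    -- every `gΛg⁻¹ ∩ hΣh⁻¹` has infinite index in `gΛg⁻¹`: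
    (hconj : ∀ g h : G,
      Subgroup.relIndex (Subgroup.map (MulAut.conj h).toMonoidHom Sg)
        (Subgroup.map (MulAut.conj g).toMonoidHom Lam) = 0)
    -- some `λ ∈ Λ` satisfies `λY ⊊ Y` or `λY* ⊊ Y*`:
    (hmove : ∃ lam ∈ Lam, lam • Y ⊂ Y ∨ lam • Yᶜ ⊂ Yᶜ) :
    Crosses Sg X Y := by
  subst hX; subst hY
  obtain ⟨lam, hlamΛ, hcase⟩ := hmove
  obtain ⟨μ, hμΛ, hμY⟩ :
      ∃ μ ∈ Lam, μ • amalgX Sg T2 T2' ⊂ amalgX Sg T2 T2' := by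
    rcases hcase with hc | hc
    · exact ⟨lam, hlamΛ, hc⟩
    · refine ⟨lam⁻¹, Lam.inv_mem hlamΛ, ?_⟩
      rw [Set.smul_set_compl] at hc
      have hsub : amalgX Sg T2 T2' ⊆ lam • amalgX Sg T2 T2' :=
        Set.compl_subset_compl.mp hc.subset
      have hne : amalgX Sg T2 T2' ≠ lam • amalgX Sg T2 T2' := by
        intro h
        exact hc.ne (by rw [← h])
      refine Set.ssubset_iff_subset_ne.2 ⟨?_, ?_⟩
      · have h2 := Set.smul_set_mono (a := lam⁻¹) hsub
        rwa [inv_smul_smul] at h2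
      · intro h
        apply hne
        have := congrArg (fun S => lam • S) h
        simpa [smul_inv_smul] using this
  obtain ⟨P1, P2⟩ := AFPAux.mu_master hSg hA2 hB2 hT2 hT2' hNF2 hμY
  -- a point of X
  obtain ⟨a₀, ha₀, ha₀H⟩ := SetLike.exists_of_lt hA1
  obtain ⟨t₁, σ₀, ht₁T, -, -, hnet⟩ := AFPAux.exists_rep hT1 ha₀
  have ht₁ne : t₁ ≠ 1 := hnet ha₀H
  have ht₁norm : IsNormalWord T1 T1' [t₁] := by
    refine ⟨?_, List.isChain_singleton t₁⟩
    rintro z hz; rcases List.mem_singleton.1 hz with rfl; exact ⟨ht₁ne, Or.inl ht₁T⟩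
  have hx₀X : t₁ ∈ amalgX Lam T1 T1' := by
    simpa using AFPAux.mem_amalgX_of (σ := 1) ht₁norm Lam.one_mem (t := t₁) rfl ht₁T
  obtain ⟨N₀, hN₀⟩ := P2 t₁
  have hKpos : ∀ m : ℕ, 1 ≤ m → μ ^ m ∉ Sg := fun m hm => (P1 m hm).2.1
  have hKneg : ∀ m : ℕ, 1 ≤ m → (μ⁻¹) ^ m ∉ Sg := by
    intro m hm hmem
    exact hKpos m hm (by simpa [inv_pow] using Sg.inv_mem hmem)
  refine ⟨?_, ?_, ?_, ?_⟩
  · -- X ∩ Y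
    apply AFPAux.infinite_rproj Sg _ (fun n => μ ^ (N₀ + 1 + n) * t₁)
    · intro n
      exact ⟨AFPAux.mul_mem_amalgX hLam hT1 hT1' (Lam.pow_mem hμΛ _) hx₀X,
        (hN₀ _ (by omega)).1⟩
    · intro m n h
      have he : μ ^ (N₀ + 1 + n) * t₁ * (μ ^ (N₀ + 1 + m) * t₁)⁻¹ =
          μ ^ (N₀ + 1 + n) * (μ ^ (N₀ + 1 + m))⁻¹ := by group
      rw [he] at h
      have := AFPAux.pow_coset_inj Sg hKpos h
      omega
  · -- Xᶜ ∩ Y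
    apply AFPAux.infinite_rproj Sg _ (fun n => μ ^ (n + 1))
    · intro n
      exact ⟨AFPAux.H_not_mem_amalgX hLam hT1 hT1' hNF1 (Lam.pow_mem hμΛ _),
        (P1 (n + 1) (by omega)).1⟩
    · intro m n h
      have := AFPAux.pow_coset_inj Sg hKpos h
      omega
  · -- X ∩ Yᶜ
    apply AFPAux.infinite_rproj Sg _ (fun n => (μ ^ (N₀ + 1 + n))⁻¹ * t₁)
    · intro n
      exact ⟨AFPAux.mul_mem_amalgX hLam hT1 hT1'
          (Lam.inv_mem (Lam.pow_mem hμΛ _)) hx₀X,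
        (hN₀ _ (by omega)).2⟩
    · intro m n h
      have he : (μ ^ (N₀ + 1 + n))⁻¹ * t₁ * ((μ ^ (N₀ + 1 + m))⁻¹ * t₁)⁻¹ =
          (μ⁻¹) ^ (N₀ + 1 + n) * ((μ⁻¹) ^ (N₀ + 1 + m))⁻¹ := by
        rw [inv_pow, inv_pow]; group
      rw [he] at h
      have := AFPAux.pow_coset_inj Sg hKneg h
      omega
  · -- Xᶜ ∩ Yᶜ
    apply AFPAux.infinite_rproj Sg _ (fun n => (μ ^ (n + 1))⁻¹)
    · intro n
      exact ⟨AFPAux.H_not_mem_amalgX hLam hT1 hT1' hNF1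
          (Lam.inv_mem (Lam.pow_mem hμΛ _)),
        (P1 (n + 1) (by omega)).2.2⟩
    · intro m n h
      have he : (μ ^ (n + 1))⁻¹ * ((μ ^ (m + 1))⁻¹)⁻¹ =
          (μ⁻¹) ^ (n + 1) * ((μ⁻¹) ^ (m + 1))⁻¹ := by
        simp [inv_pow]
      rw [he] at h
      have := AFPAux.pow_coset_inj Sg hKneg h
      omega
end
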